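/- arXiv:1009.3324 — 2 statements merged into one kernel-verified Lean document; each statement's English description precedes it below -/
import Mathlib

section
/- For every integer l ≥ 2, every partition λ, and every residue 0 ≤ r ≤ l−1: c_r(λ) = ∑_{i=0}^{l−1} |λ_i^*| + c_r(λ^{(l)}), i.e. the number of boxes of λ of content congruent to r mod l equals the total size of the l-quotient of λ plus the number of boxes of the l-core of λ of content congruent to r mod l. -/
/-- A partition `λ = (λ_1 ≥ λ_2 ≥ ⋯)`: a non-increasing sequence of natural numbers with
finitely many nonzero terms.  Here `parts n` denotes `λ_{n+1}`. -/
structure Partition' where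
  parts : ℕ → ℕ
  antitone : ∀ ⦃m n : ℕ⦄, m ≤ n → parts n ≤ parts m
  eventually_zero : ∃ N : ℕ, ∀ n ≥ N, parts n = 0

namespace Partition'

/-- `|λ|`, the number of boxes of the Young diagram of `λ`. -/
noncomputable def size (lam : Partition') : ℕ := ∑ᶠ n, lam.parts n

/-- The Young diagram of `λ`: boxes `(m, n)` (column `m`, row `n`) with `m < λ_{n+1}`. -/
def cells (lam : Partition') : Set (ℕ × ℕ) := {c | c.1 < lam.parts c.2}

/-- Maya diagram of `λ`: `maya lam k` holds (bead value 1) iff `k ∉ {λ_m − m : m ≥ 1}`. -/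
def maya (lam : Partition') (k : ℤ) : Prop :=
  ¬ ∃ m : ℕ, k = (lam.parts m : ℤ) - ((m : ℤ) + 1)

/-- The conjugate partition's `(m+1)`-st part: `λ'_{m+1} = #{rows of length > m}`. -/
noncomputable def conjParts (lam : Partition') (m : ℕ) : ℕ :=
  {j : ℕ | m < lam.parts j}.ncard

/-- Hook length of the box `(m, n)`: `(λ_{n+1} − 1 − m) + (λ'_{m+1} − 1 − n) + 1`. -/
noncomputable def hookLength (lam : Partition') (m n : ℕ) : ℕ :=
  (lam.parts n - 1 - m) + (lam.conjParts m - 1 - n) + 1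

end Partition'

/-- `c` is the charge of the 0/1-sequence `μ`:
`#{k < c : μ k = 1} = #{k ≥ c : μ k = 0}` (both sets finite). -/
def IsCharge (μ : ℤ → Prop) (c : ℤ) : Prop :=
  {k : ℤ | k < c ∧ μ k}.Finite ∧ {k : ℤ | c ≤ k ∧ ¬ μ k}.Finite ∧
    {k : ℤ | k < c ∧ μ k}.ncard = {k : ℤ | c ≤ k ∧ ¬ μ k}.ncard

/-- The `i`-th quotient sequence of the Maya diagram of `λ`: `μ_i(k) = μ_λ(l·k + i)`. -/
def quotSeq (l : ℕ) (lam : Partition') (i : ℕ) : ℤ → Prop :=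
  fun k => lam.maya ((l : ℤ) * k + (i : ℕ))

/-- `Q` is the `l`-quotient of `λ` with quotient charges `p`: for each `i`, `p i` is the
charge of the `i`-th quotient sequence `μ_i` and `μ_{Q i}(k) = μ_i(k + p i)`. -/
def IsQuotientWith (l : ℕ) (lam : Partition') (p : Fin l → ℤ) (Q : Fin l → Partition') : Prop :=
  ∀ i : Fin l, IsCharge (quotSeq l lam i) (p i) ∧
    ∀ k : ℤ, (Q i).maya k ↔ quotSeq l lam i (k + p i)

/-- Two boxes are adjacent if they share an edge. -/
def Adj (a b : ℕ × ℕ) : Prop :=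
  (a.1 = b.1 ∧ (a.2 = b.2 + 1 ∨ b.2 = a.2 + 1)) ∨
    (a.2 = b.2 ∧ (a.1 = b.1 + 1 ∨ b.1 = a.1 + 1))

/-- A set of boxes is connected: any two of its boxes are joined by a path of
edge-adjacent boxes inside the set. -/
def ConnectedIn (H : Set (ℕ × ℕ)) : Prop :=
  ∀ x ∈ H, ∀ y ∈ H,
    Relation.ReflTransGen (fun a b => a ∈ H ∧ b ∈ H ∧ Adj a b) x y

/-- `H` contains a 2×2 square of boxes. -/
def HasSquare (H : Set (ℕ × ℕ)) : Prop :=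
  ∃ m n : ℕ, (m, n) ∈ H ∧ (m + 1, n) ∈ H ∧ (m, n + 1) ∈ H ∧ (m + 1, n + 1) ∈ H

/-- `H` is a rim hook of length `l` of `λ`: a connected set of `l` boxes of `λ`,
containing no 2×2 square, whose removal leaves the Young diagram of a partition. -/
def IsRimHook (l : ℕ) (lam : Partition') (H : Set (ℕ × ℕ)) : Prop :=
  H ⊆ lam.cells ∧ H.Finite ∧ H.ncard = l ∧ ConnectedIn H ∧ ¬ HasSquare H ∧
    ∃ mu : Partition', mu.cells = lam.cells \ H

/-- `μ` is obtained from `λ` by removing one rim hook of length `l`. -/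
def RemoveHook (l : ℕ) (lam mu : Partition') : Prop :=
  ∃ H : Set (ℕ × ℕ), IsRimHook l lam H ∧ mu.cells = lam.cells \ H

/-- `λ` is an `l`-core: it admits no rim hook of length `l`. -/
def IsLCore (l : ℕ) (lam : Partition') : Prop := ¬ ∃ H : Set (ℕ × ℕ), IsRimHook l lam H

/-- `c` is the `l`-core of `λ`: obtained from `λ` by repeatedly removing rim hooks of
length `l` until none remain. -/
def IsCoreOf (l : ℕ) (lam c : Partition') : Prop :=
  Relation.ReflTransGen (RemoveHook l) lam c ∧ IsLCore l c

/-- Number of boxes `(m,n)` of `λ` with content `m − n ≡ r (mod l)`. -/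
noncomputable def contentCount (l : ℕ) (lam : Partition') (r : ℤ) : ℕ :=
  {c : ℕ × ℕ | c ∈ lam.cells ∧ ((c.1 : ℤ) - (c.2 : ℤ)) ≡ r [ZMOD (l : ℤ)]}.ncard

/-- `N_d(λ)`: the number of boxes `(m,n)` of `λ` with content `m − n = d`. -/
noncomputable def diagCount (lam : Partition') (d : ℤ) : ℕ :=
  {c : ℕ × ℕ | c ∈ lam.cells ∧ ((c.1 : ℤ) - (c.2 : ℤ)) = d}.ncard

/-- `K` is the blended partition of the charges `p` and the `l`-tuple of partitions `R`:
`{p + K_m − m : m ≥ 1} = {l·(R_{i,m} − m + p_i) + i : 0 ≤ i ≤ l−1, m ≥ 1}` in `ℤ`. -/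
def IsBlended (l : ℕ) (p : Fin l → ℤ) (R : Fin l → Partition') (K : Partition') : Prop :=
  {k : ℤ | ∃ m : ℕ, k = (∑ i, p i) + (K.parts m : ℤ) - ((m : ℤ) + 1)} =
    {k : ℤ | ∃ i : Fin l, ∃ m : ℕ,
      k = (l : ℤ) * (((R i).parts m : ℤ) - ((m : ℤ) + 1) + p i) + (i : ℕ)}

namespace Partition'

def zpos (lam : Partition') (m : ℕ) : ℤ := (lam.parts m : ℤ) - ((m : ℤ) + 1)

lemma zpos_strictAnti (lam : Partition') : StrictAnti lam.zpos := by
  intro m n hmn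
  have h := lam.antitone (Nat.succ_le_of_lt hmn)
  unfold zpos
  have : (lam.parts n : ℤ) ≤ lam.parts m := by exact_mod_cast lam.antitone hmn.le
  have h2 : lam.parts n ≤ lam.parts m := lam.antitone hmn.le
  omega

lemma maya_iff (lam : Partition') (k : ℤ) : lam.maya k ↔ ∀ m, k ≠ lam.zpos m := by
  unfold maya zpos; push_neg; rfl

lemma not_maya_zpos (lam : Partition') (m : ℕ) : ¬ lam.maya (lam.zpos m) := by
  rw [maya_iff]; push_neg; exact ⟨m, rfl⟩

lemma zpos_inj (lam : Partition') : Function.Injective lam.zpos :=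
  lam.zpos_strictAnti.injective

/-- bound below for maya -/
lemma maya_lower (lam : Partition') {N : ℕ} (hN : ∀ n ≥ N, lam.parts n = 0)
    {k : ℤ} (hk : lam.maya k) : -(N : ℤ) ≤ k := by
  by_contra h
  push_neg at h
  have h0 : (0:ℤ) ≤ -k - 1 := by omega
  set m : ℕ := (-k - 1).toNat with hm
  have hmN : N ≤ m := by omega
  have : lam.parts m = 0 := hN m hmN
  exact hk ⟨m, by rw [this]; push_cast; omega⟩

lemma not_maya_upper (lam : Partition') {k : ℤ} (hk : ¬ lam.maya k) :
    k ≤ lam.zpos 0 := by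
  rw [maya_iff] at hk; push_neg at hk
  obtain ⟨m, rfl⟩ := hk
  exact lam.zpos_strictAnti.antitone (Nat.zero_le m)

lemma cells_finite (lam : Partition') : lam.cells.Finite := by
  obtain ⟨N, hN⟩ := lam.eventually_zero
  apply Set.Finite.subset ((Set.finite_Iio (lam.parts 0)).prod (Set.finite_Iio N))
  rintro ⟨m, j⟩ hm
  simp only [cells, Set.mem_setOf_eq] at hm
  constructor
  · exact lt_of_lt_of_le hm (lam.antitone (Nat.zero_le j))
  · simp only [Set.mem_Iio]
    by_contra h
    push_neg at h
    rw [hN j h] at hm; omega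

end Partition'

/-- the set of inversions of a 0/1-sequence -/
def InvSet (μ : ℤ → Prop) : Set (ℤ × ℤ) := {q | q.1 < q.2 ∧ μ q.1 ∧ ¬ μ q.2}

lemma inv_finite_of_bounds (μ : ℤ → Prop) (lo hi : ℤ)
    (h1 : ∀ k, μ k → lo ≤ k) (h2 : ∀ k, ¬ μ k → k ≤ hi) : (InvSet μ).Finite := by
  apply Set.Finite.subset ((Set.finite_Icc lo hi).prod (Set.finite_Icc lo hi))
  rintro ⟨u, v⟩ ⟨huv, hu, hv⟩
  have h3 := h1 u hu
  have h4 := h2 v hv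
  exact ⟨⟨h3, by omega⟩, ⟨by omega, h4⟩⟩

lemma inv_maya_finite (lam : Partition') : (InvSet lam.maya).Finite := by
  obtain ⟨N, hN⟩ := lam.eventually_zero
  exact inv_finite_of_bounds _ (-(N:ℤ)) (lam.zpos 0)
    (fun k hk => lam.maya_lower hN hk) (fun k hk => lam.not_maya_upper hk)

lemma inv_quotSeq_finite (l : ℕ) (hl : 1 ≤ l) (lam : Partition') (i : ℕ) :
    (InvSet (quotSeq l lam i)).Finite := by
  obtain ⟨N, hN⟩ := lam.eventually_zero
  apply inv_finite_of_bounds _ (-(N:ℤ) - i) (max (lam.zpos 0) 0)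
  · intro k hk
    have h1 : -(N:ℤ) ≤ (l:ℤ) * k + i := lam.maya_lower hN hk
    rcases le_or_gt 0 k with h | h
    · have : (0:ℤ) ≤ i := Int.ofNat_nonneg i
      omega
    · have : (l:ℤ) * k ≤ 1 * k := by
        apply mul_le_mul_of_nonpos_right _ h.le
        exact_mod_cast hl
      omega
  · intro k hk
    have h1 : (l:ℤ) * k + i ≤ lam.zpos 0 := lam.not_maya_upper hk
    rcases le_or_gt k 0 with h | h
    · exact le_trans h (le_max_right _ _)
    · have : 1 * k ≤ (l:ℤ) * k := by
        apply mul_le_mul_of_nonneg_right _ h.le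
        exact_mod_cast hl
      have : (0:ℤ) ≤ i := Int.ofNat_nonneg i
      refine le_trans ?_ (le_max_left _ _)
      omega

/-- the swap map -/
private def swp (a : ℤ) : ℤ → ℤ := fun k => if k = a then a + 1 else if k = a + 1 then a else k

private lemma swp_lt {a u v : ℤ} (huv : u < v) (hne : ¬(u = a ∧ v = a + 1)) :
    swp a u < swp a v := by
  unfold swp
  split_ifs <;> omega

private lemma swp_swp (a : ℤ) (k : ℤ) : swp a (swp a k) = k := by
  unfold swp; split_ifs <;> omega

/-- Swapping an adjacent (1,0) pair to (0,1) decreases the inversion count by one. -/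
lemma inv_swap (μ μ' : ℤ → Prop) (a : ℤ) (ha : μ a) (hb : ¬ μ (a + 1))
    (h' : ∀ k, μ' k ↔ ((μ k ∨ k = a + 1) ∧ k ≠ a)) (hfin : (InvSet μ).Finite) :
    (InvSet μ').Finite ∧ (InvSet μ).ncard = (InvSet μ').ncard + 1 := by
  have hμ' : ∀ k, μ' k ↔ μ (swp a k) := by
    intro k
    rw [h']
    unfold swp
    split_ifs with h1 h2
    · subst h1; simp [hb]
    · subst h2; simp [ha, show a + 1 ≠ a by omega]
    · tauto
  set φ : ℤ × ℤ → ℤ × ℤ := fun q => (swp a q.1, swp a q.2) with hφ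
  have hφinj : Function.Injective φ := by
    intro q r h
    simp only [hφ, Prod.mk.injEq] at h
    have h1 : q.1 = r.1 := by have := congrArg (swp a) h.1; rwa [swp_swp, swp_swp] at this
    have h2 : q.2 = r.2 := by have := congrArg (swp a) h.2; rwa [swp_swp, swp_swp] at this
    exact Prod.ext h1 h2
  have himg : φ '' (InvSet μ') = InvSet μ \ {(a, a + 1)} := by
    ext ⟨u, v⟩
    constructor
    · rintro ⟨⟨x, y⟩, ⟨hxy, hx, hy⟩, heq⟩
      simp only [hφ, Prod.mk.injEq] at heq
      obtain ⟨rfl, rfl⟩ := heq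
      have hxa : ¬(x = a ∧ y = a + 1) := by
        rintro ⟨rfl, rfl⟩
        rw [hμ'] at hx
        simp [swp] at hx
        exact hb hx
      refine ⟨⟨swp_lt hxy hxa, ?_, ?_⟩, ?_⟩
      · rwa [hμ'] at hx
      · rwa [hμ'] at hy
      · simp only [Set.mem_singleton_iff, Prod.mk.injEq, not_and]
        intro h1 h2
        have : x = a + 1 := by have := congrArg (swp a) h1; rw [swp_swp] at this; simp [swp] at this; omega
        have : y = a := by have := congrArg (swp a) h2; rw [swp_swp] at this; simp [swp] at this; omega
        omega
    · rintro ⟨⟨huv, hu, hv⟩, hne⟩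
      simp only [Set.mem_singleton_iff, Prod.mk.injEq, not_and] at hne
      refine ⟨(swp a u, swp a v), ⟨?_, ?_, ?_⟩, ?_⟩
      · apply swp_lt huv
        rintro ⟨h1, h2⟩
        exact hne h1 h2
      · rw [hμ', swp_swp]; exact hu
      · rw [hμ', swp_swp]; exact hv
      · simp only [hφ, swp_swp]
  have hmem : (a, a + 1) ∈ InvSet μ := ⟨by omega, ha, hb⟩
  have hfin' : (InvSet μ').Finite := by
    have : (φ '' (InvSet μ')).Finite := (hfin.subset (Set.diff_subset)).subset (by rw [himg])
    exact (Set.Finite.of_finite_image this (hφinj.injOn))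
  constructor
  · exact hfin'
  · have h1 : (InvSet μ').ncard = (InvSet μ \ {(a, a+1)}).ncard := by
      rw [← himg, Set.ncard_image_of_injective _ hφinj]
    rw [h1]
    rw [Set.ncard_diff_singleton_add_one hmem hfin]

/-- translation invariance of inversion count -/
lemma inv_translate (μ : ℤ → Prop) (t : ℤ) (hfin : (InvSet μ).Finite) :
    (InvSet (fun k => μ (k + t))).Finite ∧ (InvSet (fun k => μ (k + t))).ncard = (InvSet μ).ncard := by
  set ψ : ℤ × ℤ → ℤ × ℤ := fun q => (q.1 + t, q.2 + t) with hψ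
  have hinj : Function.Injective ψ := by
    intro q r h
    simp only [hψ, Prod.mk.injEq] at h
    exact Prod.ext (by omega) (by omega)
  have himg : ψ '' (InvSet (fun k => μ (k + t))) = InvSet μ := by
    ext ⟨u, v⟩
    constructor
    · rintro ⟨⟨x, y⟩, ⟨hxy, hx, hy⟩, heq⟩
      simp only [hψ, Prod.mk.injEq] at heq
      obtain ⟨rfl, rfl⟩ := heq
      exact ⟨by omega, hx, hy⟩
    · rintro ⟨huv, hu, hv⟩
      exact ⟨(u - t, v - t), ⟨by omega, by simpa using hu, by simpa using hv⟩,
        by simp [hψ]⟩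
  have hfin' : (InvSet (fun k => μ (k + t))).Finite := by
    apply Set.Finite.of_finite_image _ hinj.injOn
    rw [himg]; exact hfin
  exact ⟨hfin', by rw [← himg, Set.ncard_image_of_injective _ hinj]⟩

lemma maya_iff' (lam : Partition') (k : ℤ) : lam.maya k ↔ ¬ ∃ m, k = lam.zpos m :=
  Iff.rfl

lemma maya_iff_rel (lam mu : Partition') (a b : ℤ)
    (hz : ∀ k, (∃ m, k = mu.zpos m) ↔ ((∃ m, k = lam.zpos m) ∧ k ≠ b) ∨ k = a) :
    ∀ k, mu.maya k ↔ ((lam.maya k ∨ k = b) ∧ k ≠ a) := by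
  intro k
  rw [maya_iff', maya_iff', hz k]
  tauto

lemma parts_le_size (nu : Partition') (m : ℕ) : nu.parts m ≤ nu.size := by
  obtain ⟨N, hN⟩ := nu.eventually_zero
  apply single_le_finsum m _ (fun j => Nat.zero_le _)
  apply Set.Finite.subset (Set.finite_Iio N)
  intro j hj
  simp only [Function.mem_support] at hj
  simp only [Set.mem_Iio]
  by_contra h
  exact hj (hN j (by omega))

lemma inv_ncard_eq_size (nu : Partition') : (InvSet nu.maya).ncard = nu.size := by
  suffices h : ∀ s : ℕ, ∀ nu : Partition', nu.size = s → (InvSet nu.maya).ncard = s by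
    exact h nu.size nu rfl
  intro s
  induction s using Nat.strong_induction_on with
  | _ s IH =>
    intro nu hs
    rcases Nat.eq_zero_or_pos s with rfl | hpos
    · -- all parts zero, no inversions
      have hz : ∀ m, nu.parts m = 0 := fun m =>
        Nat.le_zero.mp (hs ▸ parts_le_size nu m)
      have : InvSet nu.maya = ∅ := by
        ext ⟨u, v⟩
        simp only [InvSet, Set.mem_setOf_eq, Set.mem_empty_iff_false, iff_false, not_and]
        intro huv hu hv
        rw [Partition'.maya_iff] at hu
        rw [maya_iff'] at hv
        push_neg at hv
        obtain ⟨m, rfl⟩ := hv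
        have h1 : nu.zpos m = -(m:ℤ) - 1 := by unfold Partition'.zpos; rw [hz m]; push_cast; ring
        rcases le_or_gt 0 u with h | h
        · omega
        · exact hu (-u - 1).toNat (by rw [show nu.zpos (-u-1).toNat = -((-u-1).toNat : ℤ) - 1 by
            unfold Partition'.zpos; rw [hz]; push_cast; ring]; omega)
      rw [this, Set.ncard_empty]
    · -- remove a corner box
      have h0 : nu.parts 0 ≠ 0 := by
        intro h
        have : nu.size = 0 := by
          have : ∀ m, nu.parts m = 0 := fun m => Nat.le_zero.mp (h ▸ nu.antitone (Nat.zero_le m))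
          unfold Partition'.size
          exact finsum_eq_zero_of_forall_eq_zero this
        omega
      have hex : ∃ m, nu.parts m = 0 := by
        obtain ⟨N, hN⟩ := nu.eventually_zero
        exact ⟨N, hN N le_rfl⟩
      set M := Nat.find hex with hM
      have hMspec : nu.parts M = 0 := Nat.find_spec hex
      have hMpos : 0 < M := by
        rcases Nat.eq_zero_or_pos M with h | h
        · exact absurd (h ▸ hMspec) h0
        · exact h
      set n := M - 1 with hn
      have hn1 : n + 1 = M := by omega
      have hnpos : 0 < nu.parts n := by
        have := Nat.find_min hex (m := n) (by omega)
        omega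
      have hnsucc : nu.parts (n + 1) = 0 := by rw [hn1]; exact hMspec
      set nu' : Partition' := ⟨fun m => if m = n then nu.parts n - 1 else nu.parts m,
        by
          apply antitone_nat_of_succ_le
          intro j
          have h1 := nu.antitone (Nat.le_succ j)
          split_ifs with ha hb hb
          · omega
          · -- j + 1 = n, j ≠ n
            have := nu.antitone (show j ≤ n by omega)
            omega
          · -- j+1 ≠ n, j = n
            subst hb
            rw [hnsucc]; omega
          · exact h1,
        by
          refine ⟨M, fun m hm => ?_⟩
          have : m ≠ n := by omega
          simp only [this, if_false]
          exact (by have := nu.antitone hm; omega)⟩ with hnu'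
      have hparts' : ∀ m, nu'.parts m = if m = n then nu.parts n - 1 else nu.parts m := fun m => rfl
      -- size relation
      have hsize : nu.size = nu'.size + 1 := by
        have hsupp : Function.support nu.parts ⊆ ↑(Finset.range M) := by
          intro j hj
          simp only [Function.mem_support] at hj
          simp only [Finset.coe_range, Set.mem_Iio]
          by_contra h
          exact hj (by have := nu.antitone (show M ≤ j by omega); omega)
        have hsupp' : Function.support nu'.parts ⊆ ↑(Finset.range M) := by
          intro j hj
          simp only [Function.mem_support, hparts'] at hj
          simp only [Finset.coe_range, Set.mem_Iio]
          split_ifs at hj with h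
          · omega
          · by_contra hh
            exact hj (Nat.le_zero.mp (hMspec ▸ nu.antitone (by omega)))
        unfold Partition'.size
        rw [finsum_eq_sum_of_support_subset _ hsupp, finsum_eq_sum_of_support_subset _ hsupp']
        have : ∀ m ∈ Finset.range M, nu.parts m = nu'.parts m + (if m = n then 1 else 0) := by
          intro m _
          rw [hparts']
          split_ifs with h
          · subst h; omega
          · omega
        rw [Finset.sum_congr rfl this, Finset.sum_add_distrib, Finset.sum_ite_eq' (Finset.range M) n]
        simp [show n ∈ Finset.range M by simp; omega]
      -- Maya swap
      set a : ℤ := nu.zpos n - 1 with haa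
      have hzpos' : ∀ m, nu'.zpos m = if m = n then nu.zpos n - 1 else nu.zpos m := by
        intro m
        unfold Partition'.zpos
        rw [hparts']
        split_ifs with h
        · subst h; push_cast [hnpos]; omega
        · rfl
      have hz : ∀ k, (∃ m, k = nu'.zpos m) ↔ ((∃ m, k = nu.zpos m) ∧ k ≠ nu.zpos n) ∨ k = a := by
        intro k
        constructor
        · rintro ⟨m, rfl⟩
          rw [hzpos' m]
          split_ifs with h
          · right; rfl
          · left
            exact ⟨⟨m, rfl⟩, fun hc => h (nu.zpos_inj hc)⟩
        · rintro (⟨⟨m, rfl⟩, hne⟩ | rfl)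
          · refine ⟨m, ?_⟩
            rw [hzpos' m, if_neg (fun hc => hne (by rw [hc]))]
          · exact ⟨n, by rw [hzpos' n, if_pos rfl]⟩
      have hmaya := maya_iff_rel nu nu' a (nu.zpos n) hz
      have hmaya_a : nu.maya a := by
        rw [Partition'.maya_iff]
        intro m hc
        rcases le_or_gt m n with h | h
        · have : nu.zpos n ≤ nu.zpos m := nu.zpos_strictAnti.antitone h
          omega
        · have h1 : nu.zpos m ≤ nu.zpos (n+1) := nu.zpos_strictAnti.antitone h
          have h2 : nu.zpos (n+1) = -(n:ℤ) - 2 := by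
            unfold Partition'.zpos; rw [hnsucc]; push_cast; ring
          have h3 : nu.zpos n = (nu.parts n : ℤ) - n - 1 := by unfold Partition'.zpos; ring
          omega
      have hswap := inv_swap nu.maya nu'.maya a hmaya_a
        (by rw [show a + 1 = nu.zpos n by omega]; exact nu.not_maya_zpos n)
        (by intro k; rw [hmaya k, show a + 1 = nu.zpos n by omega])
        (inv_maya_finite nu)
      have hIH := IH (s - 1) (by omega) nu' (by omega)
      omega

/-- The contents function. -/
def cont (c : ℕ × ℕ) : ℤ := (c.1 : ℤ) - (c.2 : ℤ)

lemma adj_symm {a b : ℕ × ℕ} (h : Adj a b) : Adj b a := by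
  unfold Adj at *; omega

/-- The combinatorial structure of a rim-hook removal, in terms of the parts of
the two partitions. -/
structure HookData (lam mu : Partition') (n n' : ℕ) : Prop where
  hnn : n ≤ n'
  hrow : ∀ j, n ≤ j → j ≤ n' → mu.parts j < lam.parts j
  hstep : ∀ j, n ≤ j → j < n' → lam.parts (j+1) = mu.parts j + 1
  houter : ∀ j, j < n ∨ n' < j → mu.parts j = lam.parts j

namespace HookData

variable {lam mu : Partition'} {n n' : ℕ} (hd : HookData lam mu n n')
include hd

lemma parts_le : ∀ j, mu.parts j ≤ lam.parts j := by
  intro j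
  rcases le_or_gt n j with h1 | h1
  · rcases le_or_gt j n' with h2 | h2
    · exact (hd.hrow j h1 h2).le
    · exact (hd.houter j (Or.inr h2)).le
  · exact (hd.houter j (Or.inl h1)).le

lemma zpos_le : ∀ j, mu.zpos j ≤ lam.zpos j := by
  intro j
  have := hd.parts_le j
  unfold Partition'.zpos
  omega

lemma zpos_eq_outer : ∀ j, (j < n ∨ n' < j) → mu.zpos j = lam.zpos j := by
  intro j hj
  have := hd.houter j hj
  unfold Partition'.zpos
  omega

lemma zpos_eq_step : ∀ j, n ≤ j → j < n' → mu.zpos j = lam.zpos (j+1) := by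
  intro j h1 h2
  have := hd.hstep j h1 h2
  unfold Partition'.zpos
  push_cast [this]
  ring

lemma a_lt_b : mu.zpos n' < lam.zpos n := by
  have h1 : mu.zpos n' ≤ mu.zpos n := mu.zpos_strictAnti.antitone hd.hnn
  have h2 : mu.parts n < lam.parts n := hd.hrow n le_rfl hd.hnn
  unfold Partition'.zpos at *
  omega

lemma maya_a : lam.maya (mu.zpos n') := by
  rw [Partition'.maya_iff]
  intro m hc
  rcases le_or_gt m n' with h | h
  · have h1 : lam.zpos n' ≤ lam.zpos m := lam.zpos_strictAnti.antitone h
    have h2 : mu.parts n' < lam.parts n' := hd.hrow n' hd.hnn le_rfl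
    unfold Partition'.zpos at *
    omega
  · have h1 : lam.zpos m ≤ lam.zpos (n'+1) := lam.zpos_strictAnti.antitone h
    have h2 : mu.parts (n'+1) = lam.parts (n'+1) := hd.houter _ (Or.inr (by omega))
    have h3 : mu.parts (n'+1) ≤ mu.parts n' := mu.antitone (Nat.le_succ n')
    unfold Partition'.zpos at *
    omega

lemma zeros : ∀ k, (∃ m, k = mu.zpos m) ↔
    ((∃ m, k = lam.zpos m) ∧ k ≠ lam.zpos n) ∨ k = mu.zpos n' := by
  intro k
  constructor
  · rintro ⟨j, rfl⟩
    rcases le_or_gt n j with h1 | h1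
    · rcases le_or_gt j n' with h2 | h2
      · rcases eq_or_lt_of_le h2 with rfl | h3
        · right; rfl
        · left
          rw [hd.zpos_eq_step j h1 h3]
          exact ⟨⟨j+1, rfl⟩, fun hc => by
            have := lam.zpos_inj hc; omega⟩
      · left
        rw [hd.zpos_eq_outer j (Or.inr h2)]
        exact ⟨⟨j, rfl⟩, fun hc => by
          have := lam.zpos_inj hc; have := hd.hnn; omega⟩
    · left
      rw [hd.zpos_eq_outer j (Or.inl h1)]
      exact ⟨⟨j, rfl⟩, fun hc => by have := lam.zpos_inj hc; omega⟩
  · rintro (⟨⟨m, rfl⟩, hne⟩ | rfl)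
    · have hmn : m ≠ n := fun hc => hne (by rw [hc])
      rcases lt_or_gt_of_ne hmn with h1 | h1
      · exact ⟨m, (hd.zpos_eq_outer m (Or.inl h1)).symm⟩
      · rcases le_or_gt m n' with h2 | h2
        · exact ⟨m - 1, by rw [hd.zpos_eq_step (m-1) (by omega) (by omega),
            show m - 1 + 1 = m by omega]⟩
        · exact ⟨m, (hd.zpos_eq_outer m (Or.inr h2)).symm⟩
    · exact ⟨n', rfl⟩

lemma maya : ∀ k, mu.maya k ↔ ((lam.maya k ∨ k = lam.zpos n) ∧ k ≠ mu.zpos n') :=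
  maya_iff_rel lam mu (mu.zpos n') (lam.zpos n) hd.zeros

omit hd in
lemma mem_H {m j : ℕ} : (m, j) ∈ lam.cells \ mu.cells ↔ mu.parts j ≤ m ∧ m < lam.parts j := by
  simp only [Set.mem_diff, Partition'.cells, Set.mem_setOf_eq]
  omega

lemma row_range {m j : ℕ} (h : (m, j) ∈ lam.cells \ mu.cells) : n ≤ j ∧ j ≤ n' := by
  rw [mem_H] at h
  by_contra hc
  have : mu.parts j = lam.parts j := hd.houter j (by omega)
  omega

omit hd in
lemma cont_mem {m j : ℕ} (h : (m, j) ∈ lam.cells \ mu.cells) :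
    mu.zpos j < cont (m, j) ∧ cont (m, j) ≤ lam.zpos j := by
  rw [mem_H] at h
  unfold cont Partition'.zpos
  simp only
  omega

lemma mapsTo : Set.MapsTo cont (lam.cells \ mu.cells) (Set.Ioc (mu.zpos n') (lam.zpos n)) := by
  rintro ⟨m, j⟩ h
  obtain ⟨hj1, hj2⟩ := hd.row_range h
  obtain ⟨h1, h2⟩ := cont_mem h
  have h3 : mu.zpos n' ≤ mu.zpos j := mu.zpos_strictAnti.antitone hj2
  have h4 : lam.zpos j ≤ lam.zpos n := lam.zpos_strictAnti.antitone hj1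
  exact ⟨by omega, by omega⟩

lemma cont_lt {m j m' j' : ℕ} (h : (m, j) ∈ lam.cells \ mu.cells)
    (h' : (m', j') ∈ lam.cells \ mu.cells) (hjj : j < j') :
    cont (m', j') < cont (m, j) := by
  obtain ⟨hj1, hj2⟩ := hd.row_range h
  obtain ⟨hj1', hj2'⟩ := hd.row_range h'
  obtain ⟨h1, h2⟩ := cont_mem h
  obtain ⟨h1', h2'⟩ := cont_mem h'
  have key : lam.zpos j' ≤ mu.zpos j := by
    have e1 : mu.zpos (j' - 1) = lam.zpos j' := by
      rw [hd.zpos_eq_step (j'-1) (by omega) (by omega), show j' - 1 + 1 = j' by omega]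
    have e2 : mu.zpos (j'-1) ≤ mu.zpos j := mu.zpos_strictAnti.antitone (by omega)
    omega
  omega

lemma injOn : Set.InjOn cont (lam.cells \ mu.cells) := by
  rintro ⟨m, j⟩ h ⟨m', j'⟩ h' heq
  rcases lt_trichotomy j j' with h1 | h1 | h1
  · have := hd.cont_lt h h' h1; omega
  · subst h1
    have : m = m' := by unfold cont at heq; simp only at heq; omega
    rw [this]
  · have := hd.cont_lt h' h h1; omega

lemma surjOn : Set.SurjOn cont (lam.cells \ mu.cells) (Set.Ioc (mu.zpos n') (lam.zpos n)) := by
  intro d hd'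
  classical
  obtain ⟨hda, hdb⟩ := hd'
  obtain ⟨j, hjn, hjn', hPj, hmax⟩ :
      ∃ j, n ≤ j ∧ j ≤ n' ∧ d ≤ lam.zpos j ∧ (j = n' ∨ ¬ d ≤ lam.zpos (j+1)) := by
    refine ⟨Nat.findGreatest (fun j => d ≤ lam.zpos j) n', Nat.le_findGreatest (P := fun j => d ≤ lam.zpos j) hd.hnn hdb,
      Nat.findGreatest_le n', Nat.findGreatest_spec (P := fun j => d ≤ lam.zpos j) hd.hnn hdb, ?_⟩
    rcases eq_or_lt_of_le (Nat.findGreatest_le (P := fun j => d ≤ lam.zpos j) n') with heq | hlt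
    · exact Or.inl heq
    · exact Or.inr (Nat.findGreatest_is_greatest (P := fun j => d ≤ lam.zpos j) (n := n') (by omega) (by omega))
  have hlow : mu.zpos j < d := by
    rcases eq_or_lt_of_le hjn' with heq | hlt
    · rw [heq]; exact hda
    · have hnotP : ¬ d ≤ lam.zpos (j+1) := by
        rcases hmax with heq | h
        · omega
        · exact h
      rw [hd.zpos_eq_step j hjn hlt]
      omega
  have hmu0 : (0:ℤ) ≤ d + j := by
    have e1 : (mu.parts j : ℤ) = mu.zpos j + j + 1 := by unfold Partition'.zpos; ring
    have h0 : (0:ℤ) ≤ (mu.parts j : ℤ) := Int.ofNat_nonneg _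
    omega
  refine ⟨((d + (j:ℤ)).toNat, j), ?_, ?_⟩
  · rw [mem_H]
    have e1 : (mu.parts j : ℤ) = mu.zpos j + j + 1 := by unfold Partition'.zpos; ring
    have e2 : (lam.parts j : ℤ) = lam.zpos j + j + 1 := by unfold Partition'.zpos; ring
    constructor
    · omega
    · omega
  · unfold cont
    simp only
    omega

lemma bijOn : Set.BijOn cont (lam.cells \ mu.cells) (Set.Ioc (mu.zpos n') (lam.zpos n)) :=
  ⟨hd.mapsTo, hd.injOn, hd.surjOn⟩

lemma ncard_H : (lam.cells \ mu.cells).ncard = (lam.zpos n - mu.zpos n').toNat := by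
  have h1 : cont '' (lam.cells \ mu.cells) = Set.Ioc (mu.zpos n') (lam.zpos n) :=
    hd.bijOn.image_eq
  have h2 := Set.ncard_image_of_injOn hd.injOn
  rw [h1] at h2
  rw [← h2, ← Finset.coe_Ioc, Set.ncard_coe_finset, Int.card_Ioc]

lemma nosquare : ¬ HasSquare (lam.cells \ mu.cells) := by
  rintro ⟨m, j, h1, h2, h3, h4⟩
  obtain ⟨hj1, hj2⟩ := hd.row_range h1
  obtain ⟨hj1', hj2'⟩ := hd.row_range h4
  rw [mem_H] at h1 h4
  have hstep := hd.hstep j hj1 (by omega)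
  omega

lemma top_mem : ((lam.parts n - 1 : ℕ), n) ∈ lam.cells \ mu.cells := by
  rw [mem_H]
  have := hd.hrow n le_rfl hd.hnn
  omega

lemma cont_top : cont ((lam.parts n - 1 : ℕ), n) = lam.zpos n := by
  have := hd.hrow n le_rfl hd.hnn
  unfold cont Partition'.zpos
  simp only
  omega

lemma conn_aux : ∀ (k : ℕ), ∀ x ∈ lam.cells \ mu.cells, cont x + k = lam.zpos n →
    Relation.ReflTransGen
      (fun a b => a ∈ lam.cells \ mu.cells ∧ b ∈ lam.cells \ mu.cells ∧ Adj a b)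
      x ((lam.parts n - 1 : ℕ), n) := by
  intro k
  induction k with
  | zero =>
    intro x hx hcx
    have : x = ((lam.parts n - 1 : ℕ), n) := by
      apply hd.injOn hx hd.top_mem
      rw [hd.cont_top]
      omega
    rw [this]
  | succ k IH =>
    intro x hx hcx
    obtain ⟨m, j⟩ := x
    obtain ⟨hj1, hj2⟩ := hd.row_range hx
    obtain ⟨hc1, hc2⟩ := cont_mem hx
    -- the next box, with content one higher
    have hnext : cont (m, j) + 1 ∈ Set.Ioc (mu.zpos n') (lam.zpos n) := by
      have h3 : mu.zpos n' ≤ mu.zpos j := mu.zpos_strictAnti.antitone hj2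
      constructor
      · omega
      · push_cast at hcx ⊢; omega
    obtain ⟨x', hx', hcx'⟩ := hd.surjOn hnext
    have hmj : (m : ℤ) - j = cont (m, j) := rfl
    have hadj : Adj (m, j) x' := by
      rcases lt_or_eq_of_le hc2 with hlt | heq
      · -- same row
        have hbox : ((m+1 : ℕ), j) ∈ lam.cells \ mu.cells := by
          rw [mem_H]
          rw [mem_H] at hx
          have e2 : (lam.parts j : ℤ) = lam.zpos j + j + 1 := by unfold Partition'.zpos; ring
          unfold cont at hlt
          simp only at hlt
          constructor
          · omega
          · omega
        have : x' = ((m+1:ℕ), j) := by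
          apply hd.injOn hx' hbox
          rw [hcx']
          unfold cont
          push_cast
          omega
        rw [this]
        right
        constructor
        · rfl
        · right; rfl
      · -- top of column, move up a row
        have hjn : n < j := by
          have : cont (m, j) < lam.zpos n := by omega
          by_contra hc
          push_neg at hc
          have : lam.zpos n ≤ lam.zpos j := lam.zpos_strictAnti.antitone hc
          omega
        have hstep : mu.zpos (j-1) = lam.zpos j := by
          rw [hd.zpos_eq_step (j-1) (by omega) (by omega), show j - 1 + 1 = j by omega]
        have hbox : (m, j - 1) ∈ lam.cells \ mu.cells := by
          rw [mem_H]
          rw [mem_H] at hx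
          have e1 : (mu.parts (j-1) : ℤ) = mu.zpos (j-1) + (j-1 : ℕ) + 1 := by
            unfold Partition'.zpos; ring
          have e2 : (lam.parts (j-1) : ℤ) = lam.zpos (j-1) + (j-1 : ℕ) + 1 := by
            unfold Partition'.zpos; ring
          have e3 : lam.zpos j < lam.zpos (j - 1) := lam.zpos_strictAnti (by omega)
          unfold cont at heq
          simp only at heq
          have e4 : ((j - 1 : ℕ) : ℤ) = (j : ℤ) - 1 := by omega
          constructor
          · omega
          · omega
        have : x' = (m, j - 1) := by
          apply hd.injOn hx' hbox
          rw [hcx']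
          unfold cont
          simp only
          have e4 : ((j - 1 : ℕ) : ℤ) = (j : ℤ) - 1 := by omega
          omega
        rw [this]
        left
        constructor
        · rfl
        · left; show j = (j - 1) + 1; omega
    have hR : (fun a b => a ∈ lam.cells \ mu.cells ∧ b ∈ lam.cells \ mu.cells ∧ Adj a b)
        (m, j) x' := ⟨hx, hx', hadj⟩
    exact Relation.ReflTransGen.head hR (IH x' hx' (by push_cast at hcx ⊢; omega))

lemma connected : ConnectedIn (lam.cells \ mu.cells) := by
  intro x hx y hy
  have hsym : Symmetric (fun a b => a ∈ lam.cells \ mu.cells ∧ b ∈ lam.cells \ mu.cells ∧ Adj a b) := by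
    rintro a b ⟨h1, h2, h3⟩
    exact ⟨h2, h1, adj_symm h3⟩
  have hx' := hd.mapsTo hx
  have hy' := hd.mapsTo hy
  have p1 := hd.conn_aux (lam.zpos n - cont x).toNat x hx (by
    obtain ⟨h1, h2⟩ := hx'; omega)
  have p2 := hd.conn_aux (lam.zpos n - cont y).toNat y hy (by
    obtain ⟨h1, h2⟩ := hy'; omega)
  exact p1.trans (by haveI : Std.Symm (fun a b => a ∈ lam.cells \ mu.cells ∧ b ∈ lam.cells \ mu.cells ∧ Adj a b) := ⟨fun a b h => hsym h⟩; exact Std.Symm.symm _ _ p2)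

end HookData

lemma ioc_modeq_singleton (l : ℕ) (hl : 0 < l) (a r : ℤ) :
    {d : ℤ | d ∈ Set.Ioc a (a + l) ∧ d ≡ r [ZMOD (l:ℤ)]} = {a + 1 + (r - a - 1) % l} := by
  have hl' : (0:ℤ) < l := by exact_mod_cast hl
  have he1 : (0:ℤ) ≤ (r - a - 1) % l := Int.emod_nonneg _ (by omega)
  have he2 : (r - a - 1) % l < l := Int.emod_lt_of_pos _ hl'
  have hq : (l:ℤ) * ((r - a - 1) / l) + (r - a - 1) % l = r - a - 1 := Int.mul_ediv_add_emod _ _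
  have hemod : (a + 1 + (r - a - 1) % l) ≡ r [ZMOD (l:ℤ)] := by
    rw [Int.modEq_iff_dvd]
    exact ⟨(r - a - 1) / l, by omega⟩
  ext d
  simp only [Set.mem_setOf_eq, Set.mem_Ioc, Set.mem_singleton_iff]
  constructor
  · rintro ⟨⟨h1, h2⟩, h3⟩
    have hdvd : (l:ℤ) ∣ (a + 1 + (r - a - 1) % l) - d := by
      rw [← Int.modEq_iff_dvd]
      exact h3.trans hemod.symm
    have := Int.eq_zero_of_abs_lt_dvd hdvd (by rw [abs_lt]; omega)
    omega
  · rintro rfl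
    exact ⟨⟨by omega, by omega⟩, hemod⟩

namespace HookData

variable {lam mu : Partition'} {n n' : ℕ} (hd : HookData lam mu n n')
include hd

lemma count (l : ℕ) (hl : 0 < l) (hb : lam.zpos n = mu.zpos n' + l) (r : ℤ) :
    {c : ℕ × ℕ | c ∈ lam.cells \ mu.cells ∧ ((c.1:ℤ) - (c.2:ℤ)) ≡ r [ZMOD (l:ℤ)]}.ncard = 1 := by
  set S := {c : ℕ × ℕ | c ∈ lam.cells \ mu.cells ∧ ((c.1:ℤ) - (c.2:ℤ)) ≡ r [ZMOD (l:ℤ)]}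
    with hS
  have hsub : S ⊆ lam.cells \ mu.cells := fun c hc => hc.1
  have himg : cont '' S = {d : ℤ | d ∈ Set.Ioc (mu.zpos n') (lam.zpos n) ∧ d ≡ r [ZMOD (l:ℤ)]} := by
    ext d
    constructor
    · rintro ⟨c, ⟨hc1, hc2⟩, rfl⟩
      exact ⟨hd.mapsTo hc1, hc2⟩
    · rintro ⟨hd1, hd2⟩
      obtain ⟨c, hc, rfl⟩ := hd.surjOn hd1
      exact ⟨c, ⟨hc, hd2⟩, rfl⟩
  have h1 : S.ncard = (cont '' S).ncard := (Set.ncard_image_of_injOn (hd.injOn.mono hsub)).symm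
  rw [h1, himg, hb, ioc_modeq_singleton l hl (mu.zpos n') r, Set.ncard_singleton]

end HookData

lemma adj_rows {a b : ℕ × ℕ} (h : Adj a b) : b.2 ≤ a.2 + 1 ∧ a.2 ≤ b.2 + 1 := by
  unfold Adj at h; omega

/-- The barrier argument: a path inside `H` cannot cross an empty row. -/
lemma barrier_row {H : Set (ℕ × ℕ)} {j0 : ℕ} (hbar : ∀ c ∈ H, c.2 ≠ j0)
    {x y : ℕ × ℕ}
    (hpath : Relation.ReflTransGen (fun a b => a ∈ H ∧ b ∈ H ∧ Adj a b) x y)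
    (hx : x.2 < j0) : y.2 < j0 := by
  induction hpath with
  | refl => exact hx
  | tail hab hR ih =>
    obtain ⟨h1, h2, h3⟩ := hR
    have h4 := adj_rows h3
    have h5 := hbar _ h2
    omega

/-- The barrier argument for a vertical cut between rows `j` and `j+1`. -/
lemma barrier_cut {H : Set (ℕ × ℕ)} {lam mu : Partition'} {j0 : ℕ}
    (hmem : ∀ c : ℕ × ℕ, c ∈ H ↔ mu.parts c.2 ≤ c.1 ∧ c.1 < lam.parts c.2)
    (hcut : lam.parts (j0 + 1) ≤ mu.parts j0)
    {x y : ℕ × ℕ}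
    (hpath : Relation.ReflTransGen (fun a b => a ∈ H ∧ b ∈ H ∧ Adj a b) x y)
    (hx : x.2 ≤ j0) : y.2 ≤ j0 := by
  induction hpath with
  | refl => exact hx
  | tail hab hR ih =>
    rename_i b c
    obtain ⟨h1, h2, h3⟩ := hR
    have h4 := adj_rows h3
    by_contra hc
    push_neg at hc
    have hc2 : c.2 = j0 + 1 := by omega
    have hb2 : b.2 = j0 := by omega
    have hbc : b.1 = c.1 := by
      unfold Adj at h3
      omega
    rw [hmem] at h1 h2
    rw [hb2] at h1
    rw [hc2] at h2
    omega

lemma removeHook_step {l : ℕ} (hl : 1 ≤ l) {lam mu : Partition'}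
    (h : RemoveHook l lam mu) :
    ∃ a : ℤ, lam.maya a ∧ ¬ lam.maya (a + l) ∧
      (∀ k, mu.maya k ↔ ((lam.maya k ∨ k = a + l) ∧ k ≠ a)) ∧
      (∀ r : ℤ, contentCount l lam r = contentCount l mu r + 1) := by
  obtain ⟨H, ⟨hsub, hfin, hcard, hconn, hnosq, _⟩, hcells⟩ := h
  have hsub' : mu.cells ⊆ lam.cells := by rw [hcells]; exact Set.diff_subset
  have hple : ∀ j, mu.parts j ≤ lam.parts j := by
    intro j
    by_contra hc
    push_neg at hc
    have : (lam.parts j, j) ∈ mu.cells := hc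
    have := hsub' this
    simp only [Partition'.cells, Set.mem_setOf_eq] at this
    omega
  have hH : H = lam.cells \ mu.cells := by
    rw [hcells]
    exact (Set.diff_diff_cancel_left hsub).symm
  have hmem : ∀ c : ℕ × ℕ, c ∈ H ↔ mu.parts c.2 ≤ c.1 ∧ c.1 < lam.parts c.2 := by
    rintro ⟨m, j⟩
    rw [hH]
    exact HookData.mem_H
  have hmem' : ∀ m j : ℕ, (m, j) ∈ H ↔ mu.parts j ≤ m ∧ m < lam.parts j :=
    fun m j => hmem (m, j)
  -- the set of rows meeting H
  set S := {j : ℕ | mu.parts j < lam.parts j} with hSdef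
  have hSfin : S.Finite := by
    obtain ⟨N, hN⟩ := lam.eventually_zero
    apply Set.Finite.subset (Set.finite_Iio N)
    intro j hj
    simp only [hSdef, Set.mem_setOf_eq] at hj
    simp only [Set.mem_Iio]
    by_contra hcon
    push_neg at hcon
    rw [hN j hcon] at hj
    omega
  have hSne : S.Nonempty := by
    have hHne : H.Nonempty := Set.nonempty_of_ncard_ne_zero (by omega)
    obtain ⟨⟨m, j⟩, hmj⟩ := hHne
    rw [hmem'] at hmj
    exact ⟨j, by simp only [hSdef, Set.mem_setOf_eq]; omega⟩
  have hSfne : hSfin.toFinset.Nonempty := hSfin.toFinset_nonempty.mpr hSne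
  set n := hSfin.toFinset.min' hSfne with hn
  set n' := hSfin.toFinset.max' hSfne with hn'
  have hnS : n ∈ S := hSfin.mem_toFinset.mp (hSfin.toFinset.min'_mem hSfne)
  have hn'S : n' ∈ S := hSfin.mem_toFinset.mp (hSfin.toFinset.max'_mem hSfne)
  have hbounds : ∀ j ∈ S, n ≤ j ∧ j ≤ n' := by
    intro j hj
    have hj' : j ∈ hSfin.toFinset := hSfin.mem_toFinset.mpr hj
    exact ⟨hSfin.toFinset.min'_le j hj', hSfin.toFinset.le_max' j hj'⟩
  have hxn : (mu.parts n, n) ∈ H := by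
    rw [hmem']
    simp only [hSdef, Set.mem_setOf_eq] at hnS
    exact ⟨le_rfl, hnS⟩
  have hxn' : (mu.parts n', n') ∈ H := by
    rw [hmem']
    simp only [hSdef, Set.mem_setOf_eq] at hn'S
    exact ⟨le_rfl, hn'S⟩
  -- rows between n and n' all meet H
  have hrow : ∀ j, n ≤ j → j ≤ n' → mu.parts j < lam.parts j := by
    intro j h1 h2
    by_contra hc
    push_neg at hc
    have heq : mu.parts j = lam.parts j := le_antisymm (hple j) hc
    have hjS : j ∉ S := by simp only [hSdef, Set.mem_setOf_eq]; omega
    have hjn : n ≠ j := fun hcc => hjS (hcc ▸ hnS)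
    have hjn' : n' ≠ j := fun hcc => hjS (hcc ▸ hn'S)
    have hbar : ∀ c ∈ H, c.2 ≠ j := by
      intro c hc'
      rw [hmem] at hc'
      intro hcc
      rw [hcc] at hc'
      omega
    have := barrier_row hbar (hconn _ hxn _ hxn') (by simp only; omega)
    simp only at this
    omega
  have hstep : ∀ j, n ≤ j → j < n' → lam.parts (j+1) = mu.parts j + 1 := by
    intro j h1 h2
    have hle : lam.parts (j+1) ≤ mu.parts j + 1 := by
      by_contra hc
      push_neg at hc
      apply hnosq
      have hmono : mu.parts (j+1) ≤ mu.parts j := mu.antitone (by omega)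
      have hmono2 : lam.parts (j+1) ≤ lam.parts j := lam.antitone (by omega)
      have hrj : mu.parts j < lam.parts j := hrow j h1 (by omega)
      refine ⟨mu.parts j, j, ?_, ?_, ?_, ?_⟩ <;> rw [hmem'] <;> omega
    have hge : mu.parts j < lam.parts (j+1) := by
      by_contra hc
      push_neg at hc
      have := barrier_cut hmem hc (hconn _ hxn _ hxn') (by simp only; omega)
      simp only at this
      omega
    omega
  have houter : ∀ j, j < n ∨ n' < j → mu.parts j = lam.parts j := by
    intro j hj
    have hjS : j ∉ S := by
      intro hc
      have := hbounds j hc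
      omega
    simp only [hSdef, Set.mem_setOf_eq] at hjS
    have := hple j
    omega
  have hd : HookData lam mu n n' :=
    ⟨by
      have := hbounds n hnS
      exact this.2, hrow, hstep, houter⟩
  -- key quantities
  have hcardH : (lam.zpos n - mu.zpos n').toNat = l := by
    rw [← hd.ncard_H, ← hH, hcard]
  have hab : lam.zpos n = mu.zpos n' + l := by
    have := hd.a_lt_b
    omega
  refine ⟨mu.zpos n', hd.maya_a, ?_, ?_, ?_⟩
  · rw [← hab]
    exact lam.not_maya_zpos n
  · intro k
    rw [hd.maya k, hab]
  · intro r
    unfold contentCount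
    have hceq : mu.cells ∪ (lam.cells \ mu.cells) = lam.cells :=
      Set.union_diff_cancel hsub'
    have hsplit : {c : ℕ × ℕ | c ∈ lam.cells ∧ ((c.1:ℤ) - (c.2:ℤ)) ≡ r [ZMOD (l:ℤ)]} =
        {c : ℕ × ℕ | c ∈ mu.cells ∧ ((c.1:ℤ) - (c.2:ℤ)) ≡ r [ZMOD (l:ℤ)]} ∪
        {c : ℕ × ℕ | c ∈ lam.cells \ mu.cells ∧ ((c.1:ℤ) - (c.2:ℤ)) ≡ r [ZMOD (l:ℤ)]} := by
      ext c
      simp only [Set.mem_setOf_eq, Set.mem_union, Set.mem_diff]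
      constructor
      · rintro ⟨h1, h2⟩
        by_cases hmu : c ∈ mu.cells
        · exact Or.inl ⟨hmu, h2⟩
        · exact Or.inr ⟨⟨h1, hmu⟩, h2⟩
      · rintro (⟨h1, h2⟩ | ⟨⟨h1, _⟩, h2⟩)
        · exact ⟨hsub' h1, h2⟩
        · exact ⟨h1, h2⟩
    rw [hsplit]
    have hdisj : Disjoint
        {c : ℕ × ℕ | c ∈ mu.cells ∧ ((c.1:ℤ) - (c.2:ℤ)) ≡ r [ZMOD (l:ℤ)]}
        {c : ℕ × ℕ | c ∈ lam.cells \ mu.cells ∧ ((c.1:ℤ) - (c.2:ℤ)) ≡ r [ZMOD (l:ℤ)]} := by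
      rw [Set.disjoint_iff]
      rintro c ⟨⟨h1, _⟩, ⟨⟨_, h3⟩, _⟩⟩
      exact absurd h1 h3
    rw [Set.ncard_union_eq hdisj
      ((lam.cells_finite.subset hsub').subset (fun c hc => hc.1))
      ((lam.cells_finite.subset Set.diff_subset).subset (fun c hc => hc.1))]
    rw [hd.count l (by omega) hab r]

/-- Total size of the quotient, defined intrinsically via inversions of the
quotient sequences. -/
noncomputable def Fq (l : ℕ) (lam : Partition') : ℕ :=
  ∑ i : Fin l, (InvSet (quotSeq l lam (i : ℕ))).ncard

lemma quotSeq_swap_step {l : ℕ} (hl : 1 ≤ l) {lam mu : Partition'} (a : ℤ)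
    (hma : lam.maya a) (hmb : ¬ lam.maya (a + l))
    (hiff : ∀ k, mu.maya k ↔ ((lam.maya k ∨ k = a + (l:ℤ)) ∧ k ≠ a)) :
    Fq l lam = Fq l mu + 1 := by
  have hl' : (0:ℤ) < l := by exact_mod_cast hl
  have hanonneg : 0 ≤ a % l := Int.emod_nonneg a (by omega)
  have hi0 : ((a % l).toNat : ℤ) = a % l := Int.toNat_of_nonneg hanonneg
  set i0 : ℕ := (a % l).toNat with hi0def
  have hi0l : i0 < l := by
    have := Int.emod_lt_of_pos a hl'
    omega
  set u : ℤ := a / l with hu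
  have hau : a = l * u + i0 := by
    rw [hi0, hu]
    have := Int.mul_ediv_add_emod a l
    omega
  set i0' : Fin l := ⟨i0, hi0l⟩ with hi0'
  -- other residues are unchanged
  have hother : ∀ i : Fin l, i ≠ i0' →
      InvSet (quotSeq l mu (i : ℕ)) = InvSet (quotSeq l lam (i : ℕ)) := by
    intro i hi
    have hresne : ((i : ℕ) : ℤ) ≠ a % l := by
      intro hc
      apply hi
      apply Fin.ext
      show (i : ℕ) = i0
      omega
    have hkey : ∀ k : ℤ, (l:ℤ) * k + (i:ℕ) ≠ a ∧ (l:ℤ) * k + (i:ℕ) ≠ a + l := by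
      intro k
      have hmod : ((l:ℤ) * k + (i:ℕ)) % l = (i:ℕ) := by
        rw [add_comm, Int.add_mul_emod_self_left]
        exact Int.emod_eq_of_lt (by positivity) (by exact_mod_cast i.2)
      constructor
      · intro hc
        rw [← hc, hmod] at hresne
        exact hresne rfl
      · intro hc
        have h5 : ((l:ℤ) * k + (i:ℕ)) % l = (a + l) % l := by rw [hc]
        rw [hmod] at h5
        have h6 : (a + (l:ℤ)) % l = a % l := by
          rw [show a + (l:ℤ) = a + (l:ℤ) * 1 by ring, Int.add_mul_emod_self_left]
        exact hresne (h5.trans h6)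
    have hiff2 : ∀ k, quotSeq l mu (i : ℕ) k ↔ quotSeq l lam (i : ℕ) k := by
      intro k
      unfold quotSeq
      rw [hiff]
      have := hkey k
      tauto
    ext ⟨k1, k2⟩
    simp only [InvSet, Set.mem_setOf_eq, hiff2]
  -- residue i0 : an adjacent swap
  have hmain := inv_swap (quotSeq l lam i0) (quotSeq l mu i0) u
    (by unfold quotSeq; rw [show (l:ℤ) * u + i0 = a by omega]; exact hma)
    (by unfold quotSeq; rw [show (l:ℤ) * (u+1) + i0 = a + l by ring_nf; omega]; exact hmb)
    (by
      intro k
      unfold quotSeq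
      rw [hiff]
      have e1 : (l:ℤ) * k + i0 = a ↔ k = u := by
        constructor
        · intro hc
          have : (l:ℤ) * k = (l:ℤ) * u := by omega
          exact mul_left_cancel₀ (by omega) this
        · rintro rfl; omega
      have e2 : (l:ℤ) * k + i0 = a + l ↔ k = u + 1 := by
        constructor
        · intro hc
          have : (l:ℤ) * k = (l:ℤ) * (u + 1) := by ring_nf; ring_nf at hc; omega
          exact mul_left_cancel₀ (by omega) this
        · rintro rfl; ring_nf; omega
      constructor
      · rintro ⟨h5, h6⟩
        exact ⟨by tauto, fun hc => h6 (e1.mpr hc)⟩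
      · rintro ⟨h5, h6⟩
        exact ⟨by tauto, fun hc => h6 (e1.mp hc)⟩)
    (inv_quotSeq_finite l hl lam i0)
  -- sum up
  unfold Fq
  have h2 := Finset.sum_erase_add Finset.univ
    (fun i : Fin l => (InvSet (quotSeq l lam (i : ℕ))).ncard) (Finset.mem_univ i0')
  have h3 := Finset.sum_erase_add Finset.univ
    (fun i : Fin l => (InvSet (quotSeq l mu (i : ℕ))).ncard) (Finset.mem_univ i0')
  have h1 : ∑ i ∈ Finset.univ.erase i0', (InvSet (quotSeq l lam (i : ℕ))).ncard
      = ∑ i ∈ Finset.univ.erase i0', (InvSet (quotSeq l mu (i : ℕ))).ncard := by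
    apply Finset.sum_congr rfl
    intro i hi
    rw [hother i (Finset.ne_of_mem_erase hi)]
  rw [show (i0' : ℕ) = i0 from rfl] at h2 h3
  omega

lemma quot_size_eq_Fq {l : ℕ} (hl : 1 ≤ l) {lam : Partition'} {p : Fin l → ℤ}
    {Q : Fin l → Partition'} (hquot : IsQuotientWith l lam p Q) :
    ∑ i, (Q i).size = Fq l lam := by
  unfold Fq
  apply Finset.sum_congr rfl
  intro i _
  have h1 : (Q i).size = (InvSet (Q i).maya).ncard := (inv_ncard_eq_size _).symm
  have h2 : InvSet (Q i).maya = InvSet (fun k => quotSeq l lam (i : ℕ) (k + p i)) := by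
    ext ⟨k1, k2⟩
    simp only [InvSet, Set.mem_setOf_eq, (hquot i).2]
  have h3 := inv_translate (quotSeq l lam (i : ℕ)) (p i) (inv_quotSeq_finite l hl lam i)
  rw [h1, h2, h3.2]

lemma core_no_move {l : ℕ} (hl : 1 ≤ l) {c : Partition'} (hcore : IsLCore l c)
    {a : ℤ} (hma : c.maya a) (hmb : ¬ c.maya (a + (l:ℤ))) : False := by
  have hl' : (0:ℤ) < l := by exact_mod_cast hl
  obtain ⟨n, hn⟩ : ∃ m, a + (l:ℤ) = c.zpos m := not_not.mp hmb
  have hmaya' : ∀ m, a ≠ c.zpos m := (c.maya_iff a).mp hma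
  obtain ⟨N, hN⟩ := c.eventually_zero
  -- the last row with a < zpos
  have hTfin : {m : ℕ | a < c.zpos m}.Finite := by
    apply Set.Finite.subset (Set.finite_Iio (N + (-a).toNat + 1))
    intro m hm
    simp only [Set.mem_setOf_eq] at hm
    simp only [Set.mem_Iio]
    by_contra hc
    push_neg at hc
    have h1 : c.parts m = 0 := hN m (by omega)
    have h2 : c.zpos m = -(m:ℤ) - 1 := by unfold Partition'.zpos; rw [h1]; push_cast; ring
    have h3 : ((-a).toNat : ℤ) ≥ -a := Int.self_le_toNat _
    omega
  have hnT : n ∈ {m : ℕ | a < c.zpos m} := by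
    simp only [Set.mem_setOf_eq]
    omega
  have hTne : hTfin.toFinset.Nonempty := ⟨n, hTfin.mem_toFinset.mpr hnT⟩
  obtain ⟨n', hn'T, hmax⟩ : ∃ n', a < c.zpos n' ∧ ∀ m, a < c.zpos m → m ≤ n' := by
    refine ⟨hTfin.toFinset.max' hTne, ?_, ?_⟩
    · have := hTfin.mem_toFinset.mp (hTfin.toFinset.max'_mem hTne)
      simpa using this
    · exact fun m hm => hTfin.toFinset.le_max' m (hTfin.mem_toFinset.mpr hm)
  have hnn' : n ≤ n' := hmax n (by omega)
  have hsucc : c.zpos (n' + 1) < a := by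
    rcases lt_trichotomy (c.zpos (n'+1)) a with h | h | h
    · exact h
    · exact absurd h.symm (hmaya' (n'+1))
    · have := hmax (n'+1) h; omega
  -- parts are positive in the rows between n and n'
  have hpartspos : ∀ m, n < m → m ≤ n' → 1 ≤ c.parts m := by
    intro m h1 h2
    by_contra hc
    push_neg at hc
    have h3 : c.parts n' = 0 := by
      have := c.antitone h2
      omega
    have h4 : c.parts (n'+1) = 0 := by
      have := c.antitone (show n' ≤ n' + 1 by omega)
      omega
    have h5 : c.zpos n' = -(n':ℤ) - 1 := by unfold Partition'.zpos; rw [h3]; push_cast; ring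
    have h6 : c.zpos (n'+1) = -(n':ℤ) - 2 := by unfold Partition'.zpos; rw [h4]; push_cast; ring
    omega
  -- integer versions of the key facts
  have hzn : (c.parts n : ℤ) = a + l + n + 1 := by
    unfold Partition'.zpos at hn; omega
  have ha' : a + n' + 2 ≤ (c.parts n' : ℤ) := by
    unfold Partition'.zpos at hn'T; omega
  have hs' : (c.parts (n'+1) : ℤ) ≤ a + n' + 1 := by
    unfold Partition'.zpos at hsucc; push_cast at hsucc; omega
  have ha0 : 0 ≤ a + n' + 1 := by
    have : (0:ℤ) ≤ (c.parts (n'+1) : ℤ) := Int.ofNat_nonneg _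
    omega
  -- the new partition
  set mup : ℕ → ℕ := fun j =>
    if j < n then c.parts j else if j < n' then c.parts (j+1) - 1
    else if j = n' then (a + n' + 1).toNat else c.parts j with hmup
  have hmupj : ∀ j, mup j = if j < n then c.parts j else if j < n' then c.parts (j+1) - 1
      else if j = n' then (a + n' + 1).toNat else c.parts j := fun j => rfl
  have zmup : ∀ j, (mup j : ℤ) =
      if j < n then (c.parts j : ℤ) else if j < n' then (c.parts (j+1) : ℤ) - 1
      else if j = n' then a + n' + 1 else (c.parts j : ℤ) := by
    intro j
    rw [hmupj j]
    split_ifs with h1 h2 h3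
    · rfl
    · have := hpartspos (j+1) (by omega) (by omega)
      omega
    · omega
    · rfl
  have hle : ∀ j, (mup (j+1) : ℤ) ≤ (mup j : ℤ) := by
    intro j
    rw [zmup j, zmup (j+1)]
    have hm1 : (c.parts (j+1) : ℤ) ≤ c.parts j := by exact_mod_cast c.antitone (Nat.le_succ j)
    have hm2 : (c.parts (j+1+1) : ℤ) ≤ c.parts (j+1) := by
      exact_mod_cast c.antitone (Nat.le_succ (j+1))
    by_cases c1 : j + 1 < n
    · rw [if_pos (by omega : j < n), if_pos c1]; exact hm1
    · by_cases c2 : j + 1 = n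
      · rw [if_pos (by omega : j < n)]
        rw [if_neg (by omega : ¬ j + 1 < n)]
        by_cases c3 : n < n'
        · rw [if_pos (by omega : j + 1 < n')]
          omega
        · have hc4 : n = n' := by omega
          rw [if_neg (by omega : ¬ j + 1 < n'), if_pos (by omega : j + 1 = n')]
          have hzn' : (c.parts (j+1) : ℤ) = a + l + n + 1 := by rw [c2]; exact hzn
          omega
      · -- n ≤ j
        rw [if_neg (by omega : ¬ j < n), if_neg (by omega : ¬ j + 1 < n)]
        by_cases c4 : j + 1 < n'
        · rw [if_pos (by omega : j < n'), if_pos c4]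
          omega
        · by_cases c5 : j + 1 = n'
          · rw [if_pos (by omega : j < n'), if_neg (by omega : ¬ j + 1 < n'),
              if_pos c5]
            have ha'' : a + n' + 2 ≤ (c.parts (j+1) : ℤ) := by rw [c5]; exact ha'
            omega
          · by_cases c6 : j = n'
            · rw [if_neg (by omega : ¬ j < n'), if_pos c6,
                if_neg (by omega : ¬ j + 1 < n'), if_neg (by omega : ¬ j + 1 = n')]
              have hs'' : (c.parts (j+1) : ℤ) ≤ a + n' + 1 := by rw [c6]; exact hs'
              omega
            · rw [if_neg (by omega : ¬ j < n'), if_neg c6,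
                if_neg (by omega : ¬ j + 1 < n'), if_neg (by omega : ¬ j + 1 = n')]
              exact hm1
  set mu : Partition' := ⟨mup,
    antitone_nat_of_succ_le (fun j => by exact_mod_cast hle j),
    ⟨max N (n'+1), by
      intro m hm
      rw [hmupj m]
      rw [if_neg (by omega : ¬ m < n), if_neg (by omega : ¬ m < n'),
        if_neg (by omega : ¬ m = n')]
      exact hN m (by omega)⟩⟩ with hmu
  have hmuparts : ∀ j, mu.parts j = mup j := fun j => rfl
  -- HookData
  have hd : HookData c mu n n' := by
    refine ⟨hnn', ?_, ?_, ?_⟩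
    · intro j h1 h2
      have hz := zmup j
      rw [if_neg (by omega : ¬ j < n)] at hz
      rcases lt_or_eq_of_le h2 with h3 | h3
      · rw [if_pos h3] at hz
        have h4 : (c.parts (j+1) : ℤ) ≤ c.parts j := by
          exact_mod_cast c.antitone (Nat.le_succ j)
        have h5 := hpartspos (j+1) (by
          rcases lt_or_eq_of_le h1 with h | h
          · omega
          · rw [← h] at h3 ⊢; omega) (by omega)
        rw [hmuparts]
        omega
      · rw [if_neg (by omega : ¬ j < n'), if_pos h3] at hz
        have ha'' : a + n' + 2 ≤ (c.parts j : ℤ) := by rw [h3]; exact ha'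
        rw [hmuparts]
        omega
    · intro j h1 h2
      have hz := zmup j
      rw [if_neg (by omega : ¬ j < n), if_pos h2] at hz
      have h5 := hpartspos (j+1) (by omega) (by omega)
      rw [hmuparts]
      omega
    · intro j hj
      have hz := zmup j
      rw [hmuparts]
      rcases hj with h | h
      · rw [if_pos h] at hz; omega
      · rw [if_neg (by omega : ¬ j < n), if_neg (by omega : ¬ j < n'),
          if_neg (by omega : ¬ j = n')] at hz
        omega
  -- mu has zpos n' equal to a
  have hzmu : mu.zpos n' = a := by
    unfold Partition'.zpos
    have hz := zmup n'
    rw [if_neg (by omega : ¬ n' < n), if_neg (by omega : ¬ n' < n'), if_pos rfl] at hz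
    rw [hmuparts]
    omega
  have hzc : c.zpos n = a + l := hn.symm
  -- mu.cells ⊆ c.cells
  have hsub' : mu.cells ⊆ c.cells := by
    rintro ⟨m, j⟩ hmj
    simp only [Partition'.cells, Set.mem_setOf_eq] at hmj ⊢
    exact lt_of_lt_of_le hmj (hd.parts_le j)
  -- build the rim hook
  apply hcore
  refine ⟨c.cells \ mu.cells, ⟨Set.diff_subset, c.cells_finite.subset Set.diff_subset, ?_,
    hd.connected, hd.nosquare, ⟨mu, (Set.diff_diff_cancel_left hsub').symm⟩⟩⟩
  rw [hd.ncard_H, hzmu, hzc]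
  omega

lemma exists_adjacent_inv (μ : ℤ → Prop) :
    ∀ (k : ℕ) (u : ℤ), μ u → ¬ μ (u + (k:ℤ)) → ∃ w, μ w ∧ ¬ μ (w + 1) := by
  intro k
  induction k with
  | zero =>
    intro u hu hnu
    rw [show u + ((0:ℕ):ℤ) = u by push_cast; ring] at hnu
    exact absurd hu hnu
  | succ k IH =>
    intro u hu hnu
    by_cases h : μ (u + 1)
    · exact IH (u+1) h (by rw [show u + 1 + (k:ℤ) = u + ((k+1:ℕ):ℤ) by push_cast; ring]; exact hnu)
    · exact ⟨u, hu, h⟩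

lemma core_Fq_zero {l : ℕ} (hl : 1 ≤ l) {c : Partition'} (hcore : IsLCore l c) :
    Fq l c = 0 := by
  unfold Fq
  apply Finset.sum_eq_zero
  intro i _
  by_contra hne
  obtain ⟨⟨u, v⟩, huv, hu, hv⟩ := Set.nonempty_of_ncard_ne_zero hne
  obtain ⟨w, hw, hw1⟩ := exists_adjacent_inv (quotSeq l c (i : ℕ)) (v - u).toNat u hu (by
    rw [show u + (((v - u).toNat : ℕ) : ℤ) = v by omega]
    exact hv)
  apply core_no_move hl hcore (a := (l:ℤ) * w + ((i : ℕ) : ℤ))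
  · exact hw
  · intro hcon
    apply hw1
    unfold quotSeq
    rw [show (l:ℤ) * (w + 1) + ((i:ℕ):ℤ) = (l:ℤ) * w + ((i:ℕ):ℤ) + (l:ℤ) by ring]
    exact hcon

lemma chain_count {l : ℕ} (hl : 1 ≤ l) {lam c : Partition'}
    (h : Relation.ReflTransGen (RemoveHook l) lam c) (r : ℤ) :
    contentCount l lam r + Fq l c = Fq l lam + contentCount l c r := by
  induction h using Relation.ReflTransGen.head_induction_on with
  | refl => omega
  | head hstep _hrest IH =>
    obtain ⟨a, hma, hmb, hiff, hcount⟩ := removeHook_step hl hstep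
    have h1 := quotSeq_swap_step hl a hma hmb hiff
    have h2 := hcount r
    omega

/-- For every `l ≥ 2`, every partition `λ` (with `l`-core `c` and
`l`-quotient `Q`), and every residue `0 ≤ r ≤ l−1`:
`c_r(λ) = ∑_{i=0}^{l−1} |λ_i^*| + c_r(λ^{(l)})`. -/
theorem contentCount_eq_quotient_size_add_core (l : ℕ) (hl : 2 ≤ l) (r : ℕ) (hr : r < l)
    (lam c : Partition') (p : Fin l → ℤ) (Q : Fin l → Partition')
    (hcore : IsCoreOf l lam c) (hquot : IsQuotientWith l lam p Q) :
    contentCount l lam (r : ℤ) = (∑ i, (Q i).size) + contentCount l c (r : ℤ) := by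
  have hl1 : 1 ≤ l := by omega
  have h1 := chain_count hl1 hcore.1 (r : ℤ)
  have h2 := core_Fq_zero hl1 hcore.2
  have h3 := quot_size_eq_Fq hl1 hquot
  omega
end

section
/- Let l ≥ 2, let λ be a partition with quotient charges p_i = p_i(λ), and let p = nl + m with n ∈ ℤ and 0 ≤ m ≤ l−1. Let μ'(k) = μ_λ(k − p) be the Maya diagram shifted by p, and let tilde p_i be the charge of the sequence μ'_i(k) = μ'(lk + i). Then tilde p_i = p_{i−m} + n for m ≤ i ≤ l−1 and tilde p_i = p_{i−m+l} + n + 1 for 0 ≤ i ≤ m−1; in particular ∑_{i=0}^{l−1} tilde p_i = p. -/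
section ChargeAux

/-- Sliding the reference point of a charge count. -/
lemma charge_slide (μ : ℤ → Prop) (a b : ℤ) (hab : a ≤ b)
    (hA : {k : ℤ | k < b ∧ μ k}.Finite) (hB : {k : ℤ | a ≤ k ∧ ¬ μ k}.Finite) :
    {k : ℤ | k < a ∧ μ k}.Finite ∧ {k : ℤ | b ≤ k ∧ ¬ μ k}.Finite ∧
      a + ({k : ℤ | a ≤ k ∧ ¬ μ k}.ncard : ℤ) + {k : ℤ | k < b ∧ μ k}.ncard
        = b + ({k : ℤ | b ≤ k ∧ ¬ μ k}.ncard : ℤ) + {k : ℤ | k < a ∧ μ k}.ncard := by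
  have hXa : {k : ℤ | k < a ∧ μ k} ⊆ {k : ℤ | k < b ∧ μ k} :=
    fun k hk => ⟨lt_of_lt_of_le hk.1 hab, hk.2⟩
  have hUb : {k : ℤ | b ≤ k ∧ ¬ μ k} ⊆ {k : ℤ | a ≤ k ∧ ¬ μ k} :=
    fun k hk => ⟨le_trans hab hk.1, hk.2⟩
  have hfXa := hA.subset hXa
  have hfUb := hB.subset hUb
  refine ⟨hfXa, hfUb, ?_⟩
  have hYfin : ({k : ℤ | a ≤ k ∧ k < b ∧ μ k}).Finite :=
    hA.subset (fun k hk => ⟨hk.2.1, hk.2.2⟩)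
  have hVfin : ({k : ℤ | a ≤ k ∧ k < b ∧ ¬ μ k}).Finite :=
    hB.subset (fun k hk => ⟨hk.1, hk.2.2⟩)
  have hd1 : {k : ℤ | k < b ∧ μ k}
      = {k : ℤ | k < a ∧ μ k} ∪ {k : ℤ | a ≤ k ∧ k < b ∧ μ k} := by
    ext k
    simp only [Set.mem_setOf_eq, Set.mem_union]
    constructor
    · rintro ⟨h1, h2⟩
      rcases lt_or_ge k a with h | h
      · exact Or.inl ⟨h, h2⟩
      · exact Or.inr ⟨h, h1, h2⟩
    · rintro (⟨h1, h2⟩ | ⟨h1, h2, h3⟩)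
      · exact ⟨lt_of_lt_of_le h1 hab, h2⟩
      · exact ⟨h2, h3⟩
  have hd2 : {k : ℤ | a ≤ k ∧ ¬ μ k}
      = {k : ℤ | b ≤ k ∧ ¬ μ k} ∪ {k : ℤ | a ≤ k ∧ k < b ∧ ¬ μ k} := by
    ext k
    simp only [Set.mem_setOf_eq, Set.mem_union]
    constructor
    · rintro ⟨h1, h2⟩
      rcases lt_or_ge k b with h | h
      · exact Or.inr ⟨h1, h, h2⟩
      · exact Or.inl ⟨h, h2⟩
    · rintro (⟨h1, h2⟩ | ⟨h1, h2, h3⟩)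
      · exact ⟨le_trans hab h1, h2⟩
      · exact ⟨h1, h3⟩
  have hd3 : (Set.Ico a b)
      = {k : ℤ | a ≤ k ∧ k < b ∧ μ k} ∪ {k : ℤ | a ≤ k ∧ k < b ∧ ¬ μ k} := by
    ext k
    simp only [Set.mem_Ico, Set.mem_setOf_eq, Set.mem_union]
    tauto
  have hc1 : {k : ℤ | k < b ∧ μ k}.ncard
      = {k : ℤ | k < a ∧ μ k}.ncard + {k : ℤ | a ≤ k ∧ k < b ∧ μ k}.ncard := by
    rw [hd1]
    exact Set.ncard_union_eq
      (by rw [Set.disjoint_left]; rintro k ⟨h1, _⟩ ⟨h2, _⟩; omega) hfXa hYfin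
  have hc2 : {k : ℤ | a ≤ k ∧ ¬ μ k}.ncard
      = {k : ℤ | b ≤ k ∧ ¬ μ k}.ncard + {k : ℤ | a ≤ k ∧ k < b ∧ ¬ μ k}.ncard := by
    rw [hd2]
    exact Set.ncard_union_eq
      (by rw [Set.disjoint_left]; rintro k ⟨h1, _⟩ ⟨_, h2, _⟩; omega) hfUb hVfin
  have hc3 : {k : ℤ | a ≤ k ∧ k < b ∧ μ k}.ncard
      + {k : ℤ | a ≤ k ∧ k < b ∧ ¬ μ k}.ncard = (b - a).toNat := by
    rw [← Set.ncard_union_eq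
        (by rw [Set.disjoint_left]; rintro k ⟨_, _, h1⟩ ⟨_, _, h2⟩; exact h2 h1)
        hYfin hVfin, ← hd3, ← Finset.coe_Ico, Set.ncard_coe_finset, Int.card_Ico]
  omega

/-- Counting a charge from an arbitrary reference point. -/
lemma isCharge_count {μ : ℤ → Prop} {c : ℤ} (h : IsCharge μ c) (a : ℤ) :
    {k : ℤ | k < a ∧ μ k}.Finite ∧ {k : ℤ | a ≤ k ∧ ¬ μ k}.Finite ∧
      (c : ℤ) + ({k : ℤ | k < a ∧ μ k}.ncard : ℤ) = a + {k : ℤ | a ≤ k ∧ ¬ μ k}.ncard := by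
  obtain ⟨hA, hB, hAB⟩ := h
  rcases le_total a c with hac | hca
  · have hBa : {k : ℤ | a ≤ k ∧ ¬ μ k}.Finite := by
      apply (hB.union (Set.finite_Ico a c)).subset
      rintro k ⟨h1, h2⟩
      rcases le_or_gt c k with h | h
      · exact Or.inl ⟨h, h2⟩
      · exact Or.inr ⟨h1, h⟩
    obtain ⟨hfX, hfU, heq⟩ := charge_slide μ a c hac hA hBa
    exact ⟨hfX, hBa, by omega⟩
  · have hAa : {k : ℤ | k < a ∧ μ k}.Finite := by
      apply (hA.union (Set.finite_Ico c a)).subset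
      rintro k ⟨h1, h2⟩
      rcases lt_or_ge k c with h | h
      · exact Or.inl ⟨h, h2⟩
      · exact Or.inr ⟨h, h1⟩
    obtain ⟨hfX, hfU, heq⟩ := charge_slide μ c a hca hAa hB
    exact ⟨hAa, hfU, by omega⟩

/-- Charges are unique. -/
lemma charge_unique {μ : ℤ → Prop} {c c' : ℤ} (h : IsCharge μ c) (h' : IsCharge μ c') :
    c = c' := by
  obtain ⟨_, _, heq⟩ := isCharge_count h c'
  obtain ⟨_, _, h'eq⟩ := h'
  omega

/-- Shifting a sequence shifts its charge. -/
lemma charge_shift {μ : ℤ → Prop} {c : ℤ} (h : IsCharge μ c) (t : ℤ) :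
    IsCharge (fun k => μ (k + t)) (c - t) := by
  obtain ⟨hA, hB, hAB⟩ := h
  have hinj : Function.Injective (fun x : ℤ => x - t) := by
    intro x y hxy
    simp only at hxy
    omega
  have e1 : {k : ℤ | k < c - t ∧ μ (k + t)} = (fun x => x - t) '' {k : ℤ | k < c ∧ μ k} := by
    ext k
    simp only [Set.mem_setOf_eq, Set.mem_image]
    constructor
    · rintro ⟨h1, h2⟩
      exact ⟨k + t, ⟨by omega, h2⟩, by ring⟩
    · rintro ⟨x, ⟨h1, h2⟩, rfl⟩
      refine ⟨by omega, ?_⟩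
      have hx : x - t + t = x := by ring
      rw [hx]
      exact h2
  have e2 : {k : ℤ | c - t ≤ k ∧ ¬ μ (k + t)} = (fun x => x - t) '' {k : ℤ | c ≤ k ∧ ¬ μ k} := by
    ext k
    simp only [Set.mem_setOf_eq, Set.mem_image]
    constructor
    · rintro ⟨h1, h2⟩
      exact ⟨k + t, ⟨by omega, h2⟩, by ring⟩
    · rintro ⟨x, ⟨h1, h2⟩, rfl⟩
      refine ⟨by omega, ?_⟩
      have hx : x - t + t = x := by ring
      rw [hx]
      exact h2
  refine ⟨e1 ▸ hA.image _, e2 ▸ hB.image _, ?_⟩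
  rw [e1, e2, Set.ncard_image_of_injective _ hinj, Set.ncard_image_of_injective _ hinj, hAB]

/-- The sum of the charges of the `l` quotient sequences equals the charge of the
full sequence. -/
lemma sum_quot_charges (l : ℕ) (hl : 1 ≤ l) (μ : ℤ → Prop) (c : ℤ)
    (hc : IsCharge μ c) (p : Fin l → ℤ)
    (hp : ∀ i : Fin l, IsCharge (fun k => μ ((l : ℤ) * k + (i : ℕ))) (p i)) :
    ∑ i, p i = c := by
  have hl0 : (0 : ℤ) < l := by exact_mod_cast hl
  -- a point below which μ is everywhere false
  obtain ⟨b, hb⟩ := hc.1.bddBelow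
  set a₀ : ℤ := min b c with ha₀
  have hvac : ∀ k : ℤ, k < a₀ → ¬ μ k := by
    intro k hk hμ
    have hkc : k < c := lt_of_lt_of_le hk (min_le_right b c)
    have h1 : b ≤ k := hb ⟨hkc, hμ⟩
    have h2 : a₀ ≤ k := le_trans (min_le_left b c) h1
    omega
  set N : ℕ := (-a₀).toNat with hN
  have hNa : -(N : ℤ) ≤ a₀ := by omega
  have hNl : -(N : ℤ) * l ≤ -(N : ℤ) := by
    have h1 : (N : ℤ) * 1 ≤ (N : ℤ) * l := by
      apply mul_le_mul_of_nonneg_left _ (by positivity)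
      exact_mod_cast hl
    linarith
  set a : ℤ := -(N : ℤ) * l with ha
  have haa₀ : a ≤ a₀ := le_trans hNl hNa
  -- full count at a
  obtain ⟨hfA, hfZ, hfull⟩ := isCharge_count hc a
  have hAempty : {k : ℤ | k < a ∧ μ k} = ∅ := by
    ext k
    simp only [Set.mem_setOf_eq, Set.mem_empty_iff_false, iff_false, not_and]
    intro hk
    exact hvac k (lt_of_lt_of_le hk haa₀)
  rw [hAempty] at hfull
  simp only [Set.ncard_empty, Nat.cast_zero, add_zero] at hfull
  -- quotient counts at -N
  have hquot : ∀ i : Fin l,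
      {q : ℤ | -(N : ℤ) ≤ q ∧ ¬ μ ((l : ℤ) * q + (i : ℕ))}.Finite ∧
      p i = -(N : ℤ) + {q : ℤ | -(N : ℤ) ≤ q ∧ ¬ μ ((l : ℤ) * q + (i : ℕ))}.ncard := by
    intro i
    obtain ⟨hf1, hf2, heq⟩ := isCharge_count (hp i) (-(N : ℤ))
    have hempty : {q : ℤ | q < -(N : ℤ) ∧ μ ((l : ℤ) * q + (i : ℕ))} = ∅ := by
      ext q
      simp only [Set.mem_setOf_eq, Set.mem_empty_iff_false, iff_false, not_and]
      intro hq
      apply hvac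
      have hil : ((i : ℕ) : ℤ) < l := by exact_mod_cast i.isLt
      have h2 : (l : ℤ) * q ≤ (l : ℤ) * (-(N : ℤ) - 1) :=
        mul_le_mul_of_nonneg_left (by omega) (le_of_lt hl0)
      have h3 : (l : ℤ) * q + (i : ℕ) < -(N : ℤ) * l := by nlinarith
      calc (l : ℤ) * q + (i : ℕ) < -(N : ℤ) * l := h3
        _ = a := ha.symm
        _ ≤ a₀ := haa₀
    rw [hempty] at heq
    simp only [Set.ncard_empty, Nat.cast_zero, add_zero] at heq
    exact ⟨hf2, by omega⟩
  -- the zero set decomposes as a disjoint union over residues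
  have hcard : {k : ℤ | a ≤ k ∧ ¬ μ k}.ncard = ∑ i : Fin l,
      {q : ℤ | -(N : ℤ) ≤ q ∧ ¬ μ ((l : ℤ) * q + (i : ℕ))}.ncard := by
    have hZF : hfZ.toFinset = Finset.univ.biUnion (fun i : Fin l =>
        ((hquot i).1.toFinset).image (fun q => (l : ℤ) * q + (i : ℕ))) := by
      ext k
      simp only [Set.Finite.mem_toFinset, Finset.mem_biUnion, Finset.mem_univ, true_and,
        Finset.mem_image, Set.mem_setOf_eq]
      constructor
      · rintro ⟨h1, h2⟩
        have hdm := Int.mul_ediv_add_emod k (l : ℤ)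
        have h0 : 0 ≤ k % l := Int.emod_nonneg k (by omega)
        have hlt : k % l < l := Int.emod_lt_of_pos k hl0
        have hqN : -(N : ℤ) ≤ k / l := by
          rw [Int.le_ediv_iff_mul_le hl0]
          rw [ha] at h1
          exact h1
        have hcast : (((k % (l : ℤ)).toNat : ℕ) : ℤ) = k % l := by omega
        have hk2 : (l : ℤ) * (k / l) + (((k % (l : ℤ)).toNat : ℕ) : ℤ) = k := by
          rw [hcast]
          exact hdm
        refine ⟨⟨(k % (l : ℤ)).toNat, by omega⟩, k / l, ⟨hqN, ?_⟩, ?_⟩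
        · rw [hk2]
          exact h2
        · exact hk2
      · rintro ⟨i, q, ⟨h1, h2⟩, rfl⟩
        have hi0 : (0 : ℤ) ≤ ((i : ℕ) : ℤ) := by positivity
        refine ⟨?_, h2⟩
        have h3 : (l : ℤ) * (-(N : ℤ)) ≤ (l : ℤ) * q :=
          mul_le_mul_of_nonneg_left h1 (le_of_lt hl0)
        rw [ha]
        linarith
    have hdisj : ∀ i : Fin l, i ∈ Finset.univ → ∀ j : Fin l, j ∈ Finset.univ → i ≠ j →
        Disjoint (((hquot i).1.toFinset).image (fun q => (l : ℤ) * q + (i : ℕ)))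
          (((hquot j).1.toFinset).image (fun q => (l : ℤ) * q + (j : ℕ))) := by
      intro i _ j _ hij
      rw [Finset.disjoint_left]
      rintro k hki hkj
      simp only [Finset.mem_image, Set.Finite.mem_toFinset] at hki hkj
      obtain ⟨q, _, hq⟩ := hki
      obtain ⟨q', _, hq'⟩ := hkj
      have hil : ((i : ℕ) : ℤ) < l := by exact_mod_cast i.isLt
      have hjl : ((j : ℕ) : ℤ) < l := by exact_mod_cast j.isLt
      have hi0 : (0 : ℤ) ≤ ((i : ℕ) : ℤ) := by positivity
      have hj0 : (0 : ℤ) ≤ ((j : ℕ) : ℤ) := by positivity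
      have h1 : k % (l : ℤ) = ((i : ℕ) : ℤ) := by
        rw [← hq, show (l : ℤ) * q + ((i : ℕ) : ℤ) = ((i : ℕ) : ℤ) + ((l : ℤ)) * q by ring,
          Int.add_mul_emod_self_left]
        exact Int.emod_eq_of_lt hi0 hil
      have h2 : k % (l : ℤ) = ((j : ℕ) : ℤ) := by
        rw [← hq', show (l : ℤ) * q' + ((j : ℕ) : ℤ) = ((j : ℕ) : ℤ) + ((l : ℤ)) * q' by ring,
          Int.add_mul_emod_self_left]
        exact Int.emod_eq_of_lt hj0 hjl
      have hmod : ((i : ℕ) : ℤ) = ((j : ℕ) : ℤ) := h1.symm.trans h2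
      exact hij (Fin.ext (by exact_mod_cast hmod))
    have hinj : ∀ i : Fin l, Function.Injective (fun q : ℤ => (l : ℤ) * q + (i : ℕ)) := by
      intro i q q' hqq
      simp only at hqq
      have h1 : (l : ℤ) * q = (l : ℤ) * q' := by
        exact add_right_cancel hqq
      exact mul_left_cancel₀ (ne_of_gt hl0) h1
    calc {k : ℤ | a ≤ k ∧ ¬ μ k}.ncard = hfZ.toFinset.card := by
          rw [← Set.ncard_coe_finset, Set.Finite.coe_toFinset]
      _ = ∑ i : Fin l, (((hquot i).1.toFinset).image
            (fun q => (l : ℤ) * q + (i : ℕ))).card := by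
          rw [hZF, Finset.card_biUnion hdisj]
      _ = ∑ i : Fin l, {q : ℤ | -(N : ℤ) ≤ q ∧ ¬ μ ((l : ℤ) * q + (i : ℕ))}.ncard := by
          refine Finset.sum_congr rfl (fun i _ => ?_)
          rw [Finset.card_image_of_injective _ (hinj i), ← Set.ncard_coe_finset,
            Set.Finite.coe_toFinset]
  -- put everything together
  have hsum : ∑ i : Fin l, p i
      = ∑ i : Fin l, (-(N : ℤ)
          + ({q : ℤ | -(N : ℤ) ≤ q ∧ ¬ μ ((l : ℤ) * q + (i : ℕ))}.ncard : ℤ)) :=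
    Finset.sum_congr rfl (fun i _ => (hquot i).2)
  have hzc : (({k : ℤ | a ≤ k ∧ ¬ μ k}.ncard : ℤ)) = ∑ i : Fin l,
      ({q : ℤ | -(N : ℤ) ≤ q ∧ ¬ μ ((l : ℤ) * q + (i : ℕ))}.ncard : ℤ) := by
    rw [hcard]
    push_cast
    rfl
  rw [hsum, Finset.sum_add_distrib, Finset.sum_const, Finset.card_univ, Fintype.card_fin,
    ← hzc, nsmul_eq_mul]
  rw [ha] at hfull
  linarith [hfull]

/-- The Maya diagram of a partition has charge `0`. -/
lemma maya_charge_zero (lam : Partition') : IsCharge lam.maya 0 := by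
  obtain ⟨N₀, hN₀⟩ := lam.eventually_zero
  set g : ℕ → ℤ := fun mm => (lam.parts mm : ℤ) - ((mm : ℤ) + 1) with hg
  have hmaya : ∀ k : ℤ, lam.maya k ↔ ¬ ∃ mm : ℕ, k = g mm := fun k => Iff.rfl
  have hginj : Function.Injective g := by
    intro x y hxy
    by_contra hne
    rcases Ne.lt_or_gt hne with hlt | hlt
    · have h1 : lam.parts y ≤ lam.parts x := lam.antitone (le_of_lt hlt)
      simp only [hg] at hxy
      omega
    · have h1 : lam.parts x ≤ lam.parts y := lam.antitone (le_of_lt hlt)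
      simp only [hg] at hxy
      omega
  have hbig : ∀ mm : ℕ, N₀ ≤ mm → g mm = -((mm : ℤ) + 1) := by
    intro mm h
    simp only [hg, hN₀ mm h]
    push_cast
    ring
  have hlow : ∀ mm : ℕ, mm < N₀ → -(N₀ : ℤ) ≤ g mm := by
    intro mm h
    simp only [hg]
    have h0 : (0 : ℤ) ≤ lam.parts mm := by positivity
    omega
  have hmem : ∀ mm : ℕ, -(N₀ : ℤ) ≤ g mm → mm < N₀ := by
    intro mm hmm
    by_contra h
    have := hbig mm (by omega)
    omega
  have hcover : ∀ k : ℤ, k < -(N₀ : ℤ) → ∃ mm : ℕ, k = g mm := by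
    intro k hk
    refine ⟨(-k - 1).toNat, ?_⟩
    have h2 : (((-k - 1).toNat : ℕ) : ℤ) = -k - 1 := by omega
    rw [hbig _ (by omega)]
    omega
  have hIfin : (g '' (Set.Iio N₀)).Finite := (Set.finite_Iio N₀).image g
  have hIcard : (g '' (Set.Iio N₀)).ncard = N₀ := by
    rw [Set.ncard_image_of_injective _ hginj, ← Finset.coe_Iio, Set.ncard_coe_finset,
      Nat.card_Iio]
  have hIcoFin : (Set.Ico (-(N₀ : ℤ)) 0).Finite := Set.finite_Ico _ _
  have hIcoCard : (Set.Ico (-(N₀ : ℤ)) 0).ncard = N₀ := by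
    rw [← Finset.coe_Ico, Set.ncard_coe_finset, Int.card_Ico]
    omega
  have hA : {k : ℤ | k < 0 ∧ lam.maya k} = Set.Ico (-(N₀ : ℤ)) 0 \ (g '' (Set.Iio N₀)) := by
    ext k
    simp only [Set.mem_setOf_eq, Set.mem_diff, Set.mem_Ico, Set.mem_image, Set.mem_Iio]
    rw [hmaya]
    constructor
    · rintro ⟨h1, h2⟩
      refine ⟨⟨?_, h1⟩, ?_⟩
      · by_contra hc
        exact h2 (hcover k (by omega))
      · rintro ⟨mm, _, hmmk⟩
        exact h2 ⟨mm, hmmk.symm⟩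
    · rintro ⟨⟨h1, h2⟩, h3⟩
      refine ⟨h2, ?_⟩
      rintro ⟨mm, rfl⟩
      exact h3 ⟨mm, hmem mm h1, rfl⟩
  have hB : {k : ℤ | 0 ≤ k ∧ ¬ lam.maya k} = (g '' (Set.Iio N₀)) \ Set.Ico (-(N₀ : ℤ)) 0 := by
    ext k
    simp only [Set.mem_setOf_eq, Set.mem_diff, Set.mem_Ico, Set.mem_image, Set.mem_Iio]
    rw [hmaya]
    constructor
    · rintro ⟨h1, h2⟩
      obtain ⟨mm, rfl⟩ := not_not.mp h2
      refine ⟨⟨mm, hmem mm (by omega), rfl⟩, ?_⟩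
      intro hc
      omega
    · rintro ⟨⟨mm, hmm, rfl⟩, h3⟩
      have h4 := hlow mm hmm
      exact ⟨by omega, not_not.mpr ⟨mm, rfl⟩⟩
  refine ⟨?_, ?_, ?_⟩
  · rw [hA]
    exact hIcoFin.diff
  · rw [hB]
    exact hIfin.diff
  · rw [hA, hB]
    have e1 : Set.Ico (-(N₀ : ℤ)) 0 \ (g '' (Set.Iio N₀))
        = Set.Ico (-(N₀ : ℤ)) 0 \ (Set.Ico (-(N₀ : ℤ)) 0 ∩ (g '' (Set.Iio N₀))) :=
      (Set.diff_self_inter).symm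
    have e2 : (g '' (Set.Iio N₀)) \ Set.Ico (-(N₀ : ℤ)) 0
        = (g '' (Set.Iio N₀)) \ ((g '' (Set.Iio N₀)) ∩ Set.Ico (-(N₀ : ℤ)) 0) :=
      (Set.diff_self_inter).symm
    have c1 := Set.ncard_diff_add_ncard_of_subset
      (Set.inter_subset_left (s := Set.Ico (-(N₀ : ℤ)) 0) (t := g '' (Set.Iio N₀))) hIcoFin
    have c2 := Set.ncard_diff_add_ncard_of_subset
      (Set.inter_subset_left (s := g '' (Set.Iio N₀)) (t := Set.Ico (-(N₀ : ℤ)) 0)) hIfin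
    have e3 : (Set.Ico (-(N₀ : ℤ)) 0 ∩ (g '' (Set.Iio N₀))).ncard
        = ((g '' (Set.Iio N₀)) ∩ Set.Ico (-(N₀ : ℤ)) 0).ncard := by
      rw [Set.inter_comm]
    rw [e1, e2]
    omega

end ChargeAux

/-- Let `l ≥ 2`, let `λ` have quotient charges `p_i`, and let
`p = nl + m` with `0 ≤ m ≤ l−1`. Let `p̃_i` be the charge of `k ↦ μ_λ(lk + i − p)` (the
quotient sequences of the Maya diagram shifted by `p`). Then `p̃_i = p_{i−m} + n` for
`m ≤ i ≤ l−1`, `p̃_i = p_{i−m+l} + n + 1` for `0 ≤ i ≤ m−1`, and `∑ p̃_i = p`. -/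
theorem shifted_quotient_charges (l : ℕ) (hl : 2 ≤ l) (lam : Partition')
    (p : Fin l → ℤ) (hp : ∀ i : Fin l, IsCharge (quotSeq l lam i) (p i))
    (n : ℤ) (m : ℕ) (hm : m < l) (P : ℤ) (hP : P = n * l + m)
    (tp : Fin l → ℤ)
    (htp : ∀ i : Fin l, IsCharge (fun k => lam.maya ((l : ℤ) * k + (i : ℕ) - P)) (tp i)) :
    (∀ i : Fin l, ∀ _h : m ≤ (i : ℕ),
      tp i = p ⟨(i : ℕ) - m, lt_of_le_of_lt (Nat.sub_le _ _) i.isLt⟩ + n) ∧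
    (∀ i : Fin l, ∀ _h : (i : ℕ) < m,
      tp i = p ⟨(i : ℕ) + l - m, by omega⟩ + n + 1) ∧
    ∑ i, tp i = P := by
  have hl1 : 1 ≤ l := by omega
  constructor
  · -- i ≥ m
    intro i hmi
    have hfun : (fun k : ℤ => quotSeq l lam
          ((⟨(i : ℕ) - m, lt_of_le_of_lt (Nat.sub_le _ _) i.isLt⟩ : Fin l) : ℕ) (k + -n))
        = (fun k : ℤ => lam.maya ((l : ℤ) * k + (i : ℕ) - P)) := by
      funext k
      unfold quotSeq
      congr 1
      have hc : ((((i : ℕ) - m : ℕ)) : ℤ) = ((i : ℕ) : ℤ) - (m : ℤ) := by omega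
      show (l : ℤ) * (k + -n) + (((i : ℕ) - m : ℕ) : ℤ) = (l : ℤ) * k + ((i : ℕ) : ℤ) - P
      rw [hc, hP]
      ring
    have hshift : IsCharge (fun k : ℤ => lam.maya ((l : ℤ) * k + (i : ℕ) - P))
        (p ⟨(i : ℕ) - m, lt_of_le_of_lt (Nat.sub_le _ _) i.isLt⟩ + n) := by
      have h0 := charge_shift (hp ⟨(i : ℕ) - m, lt_of_le_of_lt (Nat.sub_le _ _) i.isLt⟩) (-n)
      rw [show p ⟨(i : ℕ) - m, lt_of_le_of_lt (Nat.sub_le _ _) i.isLt⟩ - -n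
          = p ⟨(i : ℕ) - m, lt_of_le_of_lt (Nat.sub_le _ _) i.isLt⟩ + n by ring] at h0
      rwa [hfun] at h0
    exact charge_unique (htp i) hshift
  constructor
  · -- i < m
    intro i hi
    have hilm : (i : ℕ) + l - m < l := by omega
    have hfun : (fun k : ℤ => quotSeq l lam
          ((⟨(i : ℕ) + l - m, hilm⟩ : Fin l) : ℕ) (k + -(n + 1)))
        = (fun k : ℤ => lam.maya ((l : ℤ) * k + (i : ℕ) - P)) := by
      funext k
      unfold quotSeq
      congr 1
      have hc : ((((i : ℕ) + l - m : ℕ)) : ℤ) = ((i : ℕ) : ℤ) + (l : ℤ) - (m : ℤ) := by omega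
      show (l : ℤ) * (k + -(n + 1)) + (((i : ℕ) + l - m : ℕ) : ℤ)
          = (l : ℤ) * k + ((i : ℕ) : ℤ) - P
      rw [hc, hP]
      ring
    have hshift : IsCharge (fun k : ℤ => lam.maya ((l : ℤ) * k + (i : ℕ) - P))
        (p ⟨(i : ℕ) + l - m, hilm⟩ + n + 1) := by
      have h0 := charge_shift (hp ⟨(i : ℕ) + l - m, hilm⟩) (-(n + 1))
      rw [show p ⟨(i : ℕ) + l - m, hilm⟩ - -(n + 1)
          = p ⟨(i : ℕ) + l - m, hilm⟩ + n + 1 by ring] at h0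
      rwa [hfun] at h0
    exact charge_unique (htp i) hshift
  · -- the sum
    have hm0 : IsCharge lam.maya 0 := maya_charge_zero lam
    have hshiftP : IsCharge (fun k : ℤ => lam.maya (k - P)) P := by
      have h0 := charge_shift hm0 (-P)
      rw [show (0 : ℤ) - -P = P by ring] at h0
      have hfe : (fun k : ℤ => lam.maya (k + -P)) = (fun k : ℤ => lam.maya (k - P)) := by
        funext k
        rw [sub_eq_add_neg]
      rwa [hfe] at h0
    exact sum_quot_charges l hl1 (fun k => lam.maya (k - P)) P hshiftP tp (fun i => htp i)
end
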